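/- arXiv:1209.3941 — 9 statements merged into one kernel-verified Lean document; each statement's English description precedes it below -/
import Mathlib

section
/- Suppose the columns a_1,…,a_n of A generate ℤ^d as a ℤ-module and that ℕA is positive. Then there exists δ_A ∈ ℕA such that (ℝ₊A + δ_A) ∩ sRes(A) = ∅, where the translated cone ℝ₊A + δ_A ⊆ ℝ^d is viewed as a subset of ℂ^d. -/
noncomputable section

open scoped BigOperators
open Matrix

variable {d n : ℕ}

/-- The `i`-th column of the integer matrix `A`, as a vector in `ℤ^d`. -/
def colZ (A : Matrix (Fin d) (Fin n) ℤ) (i : Fin n) : Fin d → ℤ := fun k => A k i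

/-- The `i`-th column of `A`, viewed in `ℝ^d`. -/
def colR (A : Matrix (Fin d) (Fin n) ℤ) (i : Fin n) : Fin d → ℝ := fun k => (A k i : ℝ)

/-- The `i`-th column of `A`, viewed in `ℂ^d`. -/
def colC (A : Matrix (Fin d) (Fin n) ℤ) (i : Fin n) : Fin d → ℂ := fun k => (A k i : ℂ)

/-- The canonical embedding `ℤ^d → ℂ^d`. -/
def zToC (m : Fin d → ℤ) : Fin d → ℂ := fun k => (m k : ℂ)

/-- The canonical embedding `ℝ^d → ℂ^d`. -/
def rToC (x : Fin d → ℝ) : Fin d → ℂ := fun k => (x k : ℂ)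

/-- The canonical embedding `ℚ^d → ℂ^d`. -/
def qToC (x : Fin d → ℚ) : Fin d → ℂ := fun k => (x k : ℂ)

/-- `ℕA`, the semigroup generated by the columns of `A` in `ℤ^d`. -/
def NA (A : Matrix (Fin d) (Fin n) ℤ) : Set (Fin d → ℤ) :=
  {m | ∃ γ : Fin n → ℕ, m = ∑ i, (γ i : ℤ) • colZ A i}

/-- `ℝ₊A`, the cone of nonnegative real combinations of the columns of `A` in `ℝ^d`. -/
def RplusA (A : Matrix (Fin d) (Fin n) ℤ) : Set (Fin d → ℝ) :=
  {x | ∃ c : Fin n → ℝ, (∀ i, 0 ≤ c i) ∧ x = ∑ i, c i • colR A i}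

/-- `ℚ₊A`, the nonnegative rational combinations of the columns of `A` in `ℚ^d`. -/
def QplusA (A : Matrix (Fin d) (Fin n) ℤ) : Set (Fin d → ℚ) :=
  {x | ∃ c : Fin n → ℚ, (∀ i, 0 ≤ c i) ∧ x = ∑ i, c i • (fun k => (A k i : ℚ))}

/-- The Zariski closure of a subset of `ℂ^d`: the common zeros of all polynomials
vanishing on it. -/
def zclosure (S : Set (Fin d → ℂ)) : Set (Fin d → ℂ) :=
  {x | ∀ p : MvPolynomial (Fin d) ℂ,
    (∀ s ∈ S, MvPolynomial.eval s p = 0) → MvPolynomial.eval x p = 0}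

/-- `qdeg_j(A)`: the Zariski closure in `ℂ^d` of `ℕA \ (a_j + ℕA)`. -/
def qdeg (A : Matrix (Fin d) (Fin n) ℤ) (j : Fin n) : Set (Fin d → ℂ) :=
  zclosure (zToC '' (NA A \ {m | ∃ m' ∈ NA A, m = colZ A j + m'}))

/-- `sRes(A) = ⋃_j ⋃_{l ∈ ℕ} ( -(l+1)·a_j + qdeg_j(A) )`, the set of strongly
resonant parameters of `A`. -/
def sRes (A : Matrix (Fin d) (Fin n) ℤ) : Set (Fin d → ℂ) :=
  ⋃ j : Fin n, ⋃ l : ℕ, (fun q => q - ((l : ℂ) + 1) • colC A j) '' qdeg A j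



/-- cone generated by a list of rational vectors -/
def qcone : List (Fin d → ℚ) → Set (Fin d → ℚ)
  | [] => {0}
  | a :: L => {x | ∃ (t : ℚ) (v : Fin d → ℚ), 0 ≤ t ∧ v ∈ qcone L ∧ x = t • a + v}

lemma qcone_nil : (qcone ([] : List (Fin d → ℚ))) = {0} := rfl

lemma qcone_cons {a : Fin d → ℚ} {L : List (Fin d → ℚ)} {x} :
    x ∈ qcone (a :: L) ↔ ∃ (t : ℚ) (v : Fin d → ℚ), 0 ≤ t ∧ v ∈ qcone L ∧ x = t • a + v := Iff.rfl

lemma zero_mem_qcone : ∀ (L : List (Fin d → ℚ)), (0 : Fin d → ℚ) ∈ qcone L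
  | [] => rfl
  | a :: L => ⟨0, 0, le_refl 0, zero_mem_qcone L, by simp⟩

lemma qcone_mono {L : List (Fin d → ℚ)} {a x} (hx : x ∈ qcone L) : x ∈ qcone (a :: L) :=
  ⟨0, x, le_refl 0, hx, by simp⟩

lemma mem_qcone_of_mem : ∀ {L : List (Fin d → ℚ)} {g}, g ∈ L → g ∈ qcone L
  | a :: L, g, hg => by
    rcases List.mem_cons.mp hg with h | h
    · exact ⟨1, 0, zero_le_one, zero_mem_qcone L, by simp [h]⟩
    · exact qcone_mono (mem_qcone_of_mem h)

/-- a linear functional nonneg on generators is nonneg on the cone -/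
lemma qcone_nonneg (φ : (Fin d → ℚ) → ℚ) (hφ0 : φ 0 = 0)
    (hφ : ∀ (t : ℚ) x v, φ (t • x + v) = t * φ x + φ v) :
    ∀ (L : List (Fin d → ℚ)), (∀ g ∈ L, 0 ≤ φ g) → ∀ v ∈ qcone L, 0 ≤ φ v
  | [], _, v, hv => by
    simp only [qcone_nil, Set.mem_singleton_iff] at hv; simp [hv, hφ0]
  | a :: L, hL, v, hv => by
    obtain ⟨t, v', ht, hv', rfl⟩ := hv
    rw [hφ]
    have h1 : 0 ≤ φ a := hL a (List.mem_cons_self)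
    have h2 : 0 ≤ φ v' := qcone_nonneg φ hφ0 hφ L (fun g hg => hL g (List.mem_cons_of_mem a hg)) v' hv'
    positivity

lemma qcone_dot_nonneg {y : Fin d → ℚ} {L : List (Fin d → ℚ)}
    (hL : ∀ g ∈ L, 0 ≤ y ⬝ᵥ g) {v} (hv : v ∈ qcone L) : 0 ≤ y ⬝ᵥ v := by
  refine qcone_nonneg (fun g => y ⬝ᵥ g) (by simp) (fun t x v => ?_) L hL v hv
  show y ⬝ᵥ (t • x + v) = _
  rw [dotProduct_add, dotProduct_smul]; simp [smul_eq_mul]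

lemma qcone_map_linear (T : (Fin d → ℚ) → (Fin d → ℚ)) (hT0 : T 0 = 0)
    (hTadd : ∀ b c, T (b + c) = T b + T c) (hTsmul : ∀ (t : ℚ) b, T (t • b) = t • T b) :
    ∀ (L : List (Fin d → ℚ)) {x}, x ∈ qcone (L.map T) → ∃ v ∈ qcone L, x = T v
  | [], x, hx => by
    simp only [List.map_nil, qcone_nil, Set.mem_singleton_iff] at hx
    exact ⟨0, rfl, by simp [hx, hT0]⟩
  | a :: L, x, hx => by
    obtain ⟨t, v', ht, hv', rfl⟩ := hx
    obtain ⟨v, hv, rfl⟩ := qcone_map_linear T hT0 hTadd hTsmul L hv'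
    exact ⟨t • a + v, ⟨t, v, ht, hv, rfl⟩, by rw [hTadd, hTsmul]⟩

lemma qcone_append : ∀ {L₁ L₂ : List (Fin d → ℚ)} {x y},
    x ∈ qcone L₁ → y ∈ qcone L₂ → x + y ∈ qcone (L₁ ++ L₂)
  | [], L₂, x, y, hx, hy => by
    simp only [qcone_nil, Set.mem_singleton_iff] at hx; simpa [hx] using hy
  | a :: L₁, L₂, x, y, hx, hy => by
    obtain ⟨t, v, ht, hv, rfl⟩ := hx
    exact ⟨t, v + y, ht, qcone_append hv hy, by rw [add_assoc]⟩

lemma dotProduct_self_pos {u : Fin d → ℚ} (h : u ≠ 0) : 0 < u ⬝ᵥ u := by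
  have h0 : 0 ≤ u ⬝ᵥ u := Finset.sum_nonneg (fun i _ => mul_self_nonneg _)
  rcases h0.lt_or_eq with h1 | h1
  · exact h1
  · exact absurd (dotProduct_self_eq_zero.mp h1.symm) h

/-- Farkas lemma over ℚ, by induction on the generator list. -/
theorem qfarkas : ∀ (N : ℕ) (L : List (Fin d → ℚ)), L.length = N → ∀ (u : Fin d → ℚ), u ∉ qcone L →
    ∃ y : Fin d → ℚ, (∀ g ∈ L, 0 ≤ y ⬝ᵥ g) ∧ y ⬝ᵥ u < 0 := by
  intro N
  induction N with
  | zero =>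
    intro L hL u hu
    rw [List.length_eq_zero_iff] at hL
    subst hL
    have hu0 : u ≠ 0 := fun h => hu (by simp [qcone_nil, h])
    refine ⟨-u, by simp, ?_⟩
    rw [neg_dotProduct, neg_lt_zero]
    exact dotProduct_self_pos hu0
  | succ N ih =>
    intro L hL u hu
    obtain ⟨a, L', rfl⟩ : ∃ a L', L = a :: L' := by
      cases L with
      | nil => simp at hL
      | cons a L' => exact ⟨a, L', rfl⟩
    have hL' : L'.length = N := by simpa using hL
    have hu' : u ∉ qcone L' := fun h => hu (qcone_mono h)
    obtain ⟨y, hy1, hy2⟩ := ih L' hL' u hu'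
    by_cases hya : 0 ≤ y ⬝ᵥ a
    · refine ⟨y, ?_, hy2⟩
      intro g hg
      rcases List.mem_cons.mp hg with h | h
      · exact h ▸ hya
      · exact hy1 g h
    · push_neg at hya
      have hα0 : y ⬝ᵥ a ≠ 0 := ne_of_lt hya
      have hTadd : ∀ b c : Fin d → ℚ,
          (b + c) - ((y ⬝ᵥ (b + c))/(y ⬝ᵥ a)) • a
            = (b - ((y ⬝ᵥ b)/(y ⬝ᵥ a)) • a) + (c - ((y ⬝ᵥ c)/(y ⬝ᵥ a)) • a) := by
        intro b c
        ext k
        simp only [dotProduct_add, Pi.add_apply, Pi.sub_apply, Pi.smul_apply, smul_eq_mul]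
        ring
      have hTsmul : ∀ (t : ℚ) (b : Fin d → ℚ),
          (t • b) - ((y ⬝ᵥ (t • b))/(y ⬝ᵥ a)) • a
            = t • (b - ((y ⬝ᵥ b)/(y ⬝ᵥ a)) • a) := by
        intro t b
        ext k
        simp only [dotProduct_smul, Pi.add_apply, Pi.sub_apply, Pi.smul_apply, smul_eq_mul]
        ring
      have hw : (u - ((y ⬝ᵥ u)/(y ⬝ᵥ a)) • a) ∉
          qcone (L'.map (fun b => b - ((y ⬝ᵥ b)/(y ⬝ᵥ a)) • a)) := by
        intro hmem
        obtain ⟨v, hv, hveq⟩ := qcone_map_linear _ (by simp) hTadd hTsmul L' hmem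
        have hyv : 0 ≤ y ⬝ᵥ v := qcone_dot_nonneg hy1 hv
        have hμ : 0 ≤ (y ⬝ᵥ u - y ⬝ᵥ v)/(y ⬝ᵥ a) :=
          le_of_lt (div_pos_of_neg_of_neg (by linarith) hya)
        apply hu
        refine ⟨(y ⬝ᵥ u - y ⬝ᵥ v)/(y ⬝ᵥ a), v, hμ, hv, ?_⟩
        have h2 : u = v - ((y ⬝ᵥ v)/(y ⬝ᵥ a)) • a + ((y ⬝ᵥ u)/(y ⬝ᵥ a)) • a := by
          rw [← hveq]; abel
        conv_lhs => rw [h2]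
        rw [sub_div, sub_smul]
        abel
      obtain ⟨z, hz1, hz2⟩ := ih _ (by simpa using hL') _ hw
      refine ⟨z - ((z ⬝ᵥ a)/(y ⬝ᵥ a)) • y, ?_, ?_⟩
      · intro g hg
        rcases List.mem_cons.mp hg with h | h
        · subst h
          rw [sub_dotProduct, smul_dotProduct]
          simp only [smul_eq_mul]
          rw [div_mul_cancel₀ _ hα0, sub_self]
        · have h1 := hz1 _ (List.mem_map_of_mem h)
          rw [dotProduct_sub, dotProduct_smul] at h1
          rw [sub_dotProduct, smul_dotProduct]
          simp only [smul_eq_mul] at h1 ⊢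
          refine h1.trans (le_of_eq ?_)
          rw [dotProduct_comm y g]
          ring
      · rw [dotProduct_sub, dotProduct_smul] at hz2
        rw [sub_dotProduct, smul_dotProduct]
        simp only [smul_eq_mul] at hz2 ⊢
        refine lt_of_eq_of_lt ?_ hz2
        rw [dotProduct_comm y u]
        ring

/-- standard basis vector and its negative -/
def posB (k : Fin d) : Fin d → ℚ := fun j => if k = j then 1 else 0
def negB (k : Fin d) : Fin d → ℚ := fun j => if k = j then -1 else 0

/-- the list of ± standard basis vectors indexed by S -/
def pmBasis (S : List (Fin d)) : List (Fin d → ℚ) :=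
  S.flatMap (fun k => [posB k, negB k])

lemma mem_qcone_pmBasis : ∀ (S : List (Fin d)) (y : Fin d → ℚ),
    (∀ k, k ∉ S → y k = 0) → y ∈ qcone (pmBasis S)
  | [], y, hy => by
    have : y = 0 := funext (fun k => hy k List.not_mem_nil)
    simp [this, pmBasis, qcone_nil]
  | k :: S, y, hy => by
    have hmem : Function.update y k 0 ∈ qcone (pmBasis S) := by
      apply mem_qcone_pmBasis
      intro j hj
      by_cases hjk : j = k
      · subst hjk; simp [Function.update_self]
      · rw [Function.update_of_ne hjk]
        exact hy j (fun h => by rcases List.mem_cons.mp h with h | h; exact hjk h; exact hj h)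
    refine qcone_cons.mpr ⟨max (y k) 0,
      (max (-(y k)) 0) • negB k + Function.update y k 0,
      le_max_right _ _,
      qcone_cons.mpr ⟨max (-(y k)) 0, Function.update y k 0, le_max_right _ _, hmem, rfl⟩, ?_⟩
    ext j
    by_cases hjk : j = k
    · subst hjk
      simp only [Pi.add_apply, Pi.smul_apply, smul_eq_mul, Function.update_self, posB, negB,
        if_pos rfl]
      rcases le_total (y j) 0 with h | h
      · rw [max_eq_right h, max_eq_left (by linarith)]; simp
      · rw [max_eq_left h, max_eq_right (by linarith)]; simp
    · have hkj : k ≠ j := fun h => hjk h.symm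
      simp only [Pi.add_apply, Pi.smul_apply, smul_eq_mul, Function.update_of_ne hjk, posB, negB,
        if_neg hkj]
      ring

lemma list_exists_min : ∀ (l : List ℚ), l ≠ [] → ∃ m ∈ l, ∀ x ∈ l, m ≤ x
  | [], h => absurd rfl h
  | a :: l, _ => by
    rcases eq_or_ne l [] with rfl | hl
    · exact ⟨a, List.mem_cons_self, by intro x hx; rcases List.mem_cons.mp hx with rfl | h; rfl; simp at h⟩
    · obtain ⟨m, hm, hmin⟩ := list_exists_min l hl
      rcases le_total a m with h | h
      · refine ⟨a, List.mem_cons_self, ?_⟩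
        intro x hx
        rcases List.mem_cons.mp hx with rfl | hx
        · rfl
        · exact h.trans (hmin x hx)
      · exact ⟨m, List.mem_cons_of_mem a hm, fun x hx => by
          rcases List.mem_cons.mp hx with rfl | hx; exact h; exact hmin x hx⟩

lemma le_foldr_max : ∀ (l : List ℚ) (c x), x ∈ l → x ≤ l.foldr max c
  | a :: l, c, x, hx => by
    rcases List.mem_cons.mp hx with rfl | hx
    · exact le_max_left _ _
    · exact (le_foldr_max l c x hx).trans (le_max_right _ _)

/-- double description: a finitely-constrained cone in ℚ^d is finitely generated -/
theorem dd : ∀ (M : List (Fin d → ℚ)), ∃ L : List (Fin d → ℚ),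
    ∀ y : Fin d → ℚ, y ∈ qcone L ↔ ∀ b ∈ M, 0 ≤ y ⬝ᵥ b
  | [] => by
    refine ⟨pmBasis (List.finRange d), fun y => ⟨fun _ b hb => absurd hb List.not_mem_nil, 
      fun _ => mem_qcone_pmBasis _ y (fun k hk => absurd (List.mem_finRange k) hk)⟩⟩
  | a :: M => by
    obtain ⟨L, hL⟩ := dd M
    classical
    set Lf : List (Fin d → ℚ) := L.filter (fun g => decide (0 ≤ g ⬝ᵥ a)) with hLf
    set Lw : List (Fin d → ℚ) := ((L.product L).filter
        (fun p => decide (0 < p.1 ⬝ᵥ a) && decide (p.2 ⬝ᵥ a < 0))).map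
        (fun p => (p.1 ⬝ᵥ a) • p.2 - (p.2 ⬝ᵥ a) • p.1) with hLw
    have memLf : ∀ g, g ∈ Lf ↔ g ∈ L ∧ 0 ≤ g ⬝ᵥ a := by
      intro g; rw [hLf, List.mem_filter]; simp
    have memLw : ∀ g₁ g₂, g₁ ∈ L → g₂ ∈ L → 0 < g₁ ⬝ᵥ a → g₂ ⬝ᵥ a < 0 →
        ((g₁ ⬝ᵥ a) • g₂ - (g₂ ⬝ᵥ a) • g₁) ∈ Lw := by
      intro g₁ g₂ h1 h2 h3 h4
      rw [hLw]
      refine List.mem_map.mpr ⟨(g₁, g₂), ?_, rfl⟩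
      rw [List.mem_filter]
      exact ⟨List.pair_mem_product.mpr ⟨h1, h2⟩, by simp [h3, h4]⟩
    -- every generator satisfies all the constraints
    have hgen : ∀ g ∈ Lf ++ Lw, (0 ≤ g ⬝ᵥ a ∧ ∀ b ∈ M, 0 ≤ g ⬝ᵥ b) := by
      intro g hg
      rcases List.mem_append.mp hg with hg | hg
      · rw [memLf] at hg
        exact ⟨hg.2, fun b hb => (hL g).mp (mem_qcone_of_mem hg.1) b hb⟩
      · rw [hLw] at hg
        obtain ⟨p, hp, rfl⟩ := List.mem_map.mp hg
        rw [List.mem_filter] at hp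
        obtain ⟨hpmem, hcond⟩ := hp
        obtain ⟨h1, h2⟩ := List.pair_mem_product.mp hpmem
        have hc1 : 0 < p.1 ⬝ᵥ a := by simpa using (Bool.and_eq_true _ _ |>.mp hcond).1
        have hc2 : p.2 ⬝ᵥ a < 0 := by simpa using (Bool.and_eq_true _ _ |>.mp hcond).2
        constructor
        · rw [sub_dotProduct, smul_dotProduct, smul_dotProduct]
          simp only [smul_eq_mul]
          nlinarith
        · intro b hb
          have hb1 : 0 ≤ p.1 ⬝ᵥ b := (hL p.1).mp (mem_qcone_of_mem h1) b hb
          have hb2 : 0 ≤ p.2 ⬝ᵥ b := (hL p.2).mp (mem_qcone_of_mem h2) b hb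
          rw [sub_dotProduct, smul_dotProduct, smul_dotProduct]
          simp only [smul_eq_mul]
          nlinarith
    refine ⟨Lf ++ Lw, fun y => ⟨?_, ?_⟩⟩
    · -- forward: y in cone satisfies constraints
      intro hy b hb
      refine qcone_nonneg (fun v => v ⬝ᵥ b) (by simp) (fun t x v => ?_) _ (fun g hg => ?_) y hy
      · show (t • x + v) ⬝ᵥ b = _
        rw [add_dotProduct, smul_dotProduct]; simp [smul_eq_mul]
      · rcases List.mem_cons.mp hb with rfl | hb'
        · exact (hgen g hg).1
        · exact (hgen g hg).2 b hb'
    · -- backward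
      intro hy
      by_contra hymem
      obtain ⟨z, hz1, hz2⟩ := qfarkas (Lf ++ Lw).length _ rfl y hymem
      have hyL : y ∈ qcone L := (hL y).mpr (fun b hb => hy b (List.mem_cons_of_mem a hb))
      have hya : 0 ≤ y ⬝ᵥ a := hy a (List.mem_cons_self)
      -- find ρ with 0 ≤ ρ * (y ⬝ᵥ a)  ≤ ... and ∀ g ∈ L, ρ * (g ⬝ᵥ a) ≤ z ⬝ᵥ g
      have hzLf : ∀ g ∈ L, 0 ≤ g ⬝ᵥ a → 0 ≤ z ⬝ᵥ g := by
        intro g hgL hga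
        exact hz1 g (List.mem_append_left _ ((memLf g).mpr ⟨hgL, hga⟩))
      have key : ∃ ρ : ℚ, 0 ≤ ρ * (y ⬝ᵥ a) ∧ ∀ g ∈ L, ρ * (g ⬝ᵥ a) ≤ z ⬝ᵥ g := by
        by_cases hP : ∃ g₀ ∈ L, 0 < g₀ ⬝ᵥ a
        · -- case A : minimum ratio over positive generators
          obtain ⟨g₀, hg₀, hg₀a⟩ := hP
          set P : List (Fin d → ℚ) := L.filter (fun g => decide (0 < g ⬝ᵥ a)) with hP'
          have hPne : (P.map (fun g => (z ⬝ᵥ g) / (g ⬝ᵥ a))) ≠ [] := by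
            simp only [ne_eq, List.map_eq_nil_iff]
            intro h
            have : g₀ ∈ P := by rw [hP', List.mem_filter]; simp [hg₀, hg₀a]
            rw [h] at this; exact List.not_mem_nil this
          obtain ⟨m, hm, hmin⟩ := list_exists_min _ hPne
          obtain ⟨gm, hgm, rfl⟩ := List.mem_map.mp hm
          rw [hP', List.mem_filter] at hgm
          have hgmL : gm ∈ L := hgm.1
          have hgma : 0 < gm ⬝ᵥ a := by simpa using hgm.2
          have hρ0 : 0 ≤ (z ⬝ᵥ gm) / (gm ⬝ᵥ a) :=
            div_nonneg (hzLf gm hgmL hgma.le) hgma.le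
          refine ⟨(z ⬝ᵥ gm) / (gm ⬝ᵥ a), mul_nonneg hρ0 hya, ?_⟩
          intro g hgL
          rcases lt_trichotomy (g ⬝ᵥ a) 0 with hga | hga | hga
          · -- negative: use the combination generator
            have hw := hz1 _ (List.mem_append_right _ (memLw gm g hgmL hgL hgma hga))
            rw [dotProduct_sub, dotProduct_smul, dotProduct_smul] at hw
            simp only [smul_eq_mul] at hw
            rw [div_mul_eq_mul_div, div_le_iff₀ hgma]
            nlinarith
          · rw [hga, mul_zero]
            exact hzLf g hgL hga.ge
          · have hgP : g ∈ P := by rw [hP', List.mem_filter]; simp [hgL, hga]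
            have hmin' := hmin ((z ⬝ᵥ g)/(g ⬝ᵥ a)) (List.mem_map.mpr ⟨g, hgP, rfl⟩)
            exact (le_div_iff₀ hga).mp hmin'
        · -- case B : all generators have nonpositive pairing with a; then y ⬝ᵥ a = 0
          push_neg at hP
          have hya0 : y ⬝ᵥ a = 0 := by
            have h1 : 0 ≤ -(y ⬝ᵥ a) := by
              refine qcone_nonneg (fun v => -(v ⬝ᵥ a)) (by simp) (fun t x v => ?_) L
                (fun g hg => by simpa using hP g hg) y hyL
              show -((t • x + v) ⬝ᵥ a) = _
              rw [add_dotProduct, smul_dotProduct]; simp [smul_eq_mul]; ring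
            linarith
          set Mρ : ℚ := ((L.filter (fun g => decide (g ⬝ᵥ a < 0))).map
            (fun g => (z ⬝ᵥ g) / (g ⬝ᵥ a))).foldr max 0 with hMρ
          refine ⟨Mρ, by rw [hya0, mul_zero], ?_⟩
          intro g hgL
          rcases eq_or_lt_of_le (hP g hgL) with hga | hga
          · rw [hga, mul_zero]
            exact hzLf g hgL hga.ge
          · have hle : (z ⬝ᵥ g) / (g ⬝ᵥ a) ≤ Mρ := by
              rw [hMρ]
              refine le_foldr_max _ _ _ (List.mem_map.mpr ⟨g, ?_, rfl⟩)
              rw [List.mem_filter]; simp [hgL, hga]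
            have := mul_le_mul_of_nonpos_right hle hga.le
            rw [div_mul_cancel₀ _ (ne_of_lt hga)] at this
            linarith [this]
      obtain ⟨ρ, hρ1, hρ2⟩ := key
      have hfin : 0 ≤ z ⬝ᵥ y - ρ * (y ⬝ᵥ a) := by
        refine qcone_nonneg (fun v => z ⬝ᵥ v - ρ * (v ⬝ᵥ a)) (by simp) (fun t x v => ?_) L
          (fun g hg => by show 0 ≤ z ⬝ᵥ g - ρ * (g ⬝ᵥ a); linarith [hρ2 g hg]) y hyL
        show z ⬝ᵥ (t • x + v) - ρ * ((t • x + v) ⬝ᵥ a) = _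
        rw [add_dotProduct, smul_dotProduct, dotProduct_add, dotProduct_smul]
        simp [smul_eq_mul]; ring
      linarith

----------------------------------------------------------------
-- application to the matrix A
----------------------------------------------------------------

/-- generic: dot product with a finite sum on the right -/
lemma dot_sum_right {ι R : Type*} [CommRing R] (v : Fin d → R) (s : Finset ι) (f : ι → Fin d → R) :
    v ⬝ᵥ (∑ i ∈ s, f i) = ∑ i ∈ s, v ⬝ᵥ f i := by
  unfold dotProduct
  simp only [Finset.sum_apply, Finset.mul_sum]
  exact Finset.sum_comm

lemma dot_smul_right {R : Type*} [CommRing R] (v : Fin d → R) (c : R) (w : Fin d → R) :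
    v ⬝ᵥ (c • w) = c * (v ⬝ᵥ w) := by
  unfold dotProduct
  simp only [Pi.smul_apply, smul_eq_mul, Finset.mul_sum]
  apply Finset.sum_congr rfl
  intros; ring

lemma NA_zero (A : Matrix (Fin d) (Fin n) ℤ) : (0 : Fin d → ℤ) ∈ NA A :=
  ⟨0, by simp⟩

lemma NA_add {A : Matrix (Fin d) (Fin n) ℤ} {m₁ m₂ : Fin d → ℤ}
    (h₁ : m₁ ∈ NA A) (h₂ : m₂ ∈ NA A) : m₁ + m₂ ∈ NA A := by
  obtain ⟨γ₁, rfl⟩ := h₁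
  obtain ⟨γ₂, rfl⟩ := h₂
  refine ⟨γ₁ + γ₂, ?_⟩
  rw [← Finset.sum_add_distrib]
  apply Finset.sum_congr rfl
  intro i _
  rw [← add_smul]
  push_cast
  simp

/-- dot of an integer vector with an element of NA -/
lemma dot_NA {A : Matrix (Fin d) (Fin n) ℤ} (h : Fin d → ℤ) {m : Fin d → ℤ}
    (hm : m ∈ NA A) : h ⬝ᵥ m = ∑ i, ((hm.choose i : ℤ)) * (h ⬝ᵥ colZ A i) := by
  conv_lhs => rw [hm.choose_spec]
  rw [dot_sum_right]
  apply Finset.sum_congr rfl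
  intro i _
  rw [dot_smul_right]

lemma dot_NA_nonneg {A : Matrix (Fin d) (Fin n) ℤ} {h : Fin d → ℤ}
    (hcol : ∀ i, 0 ≤ h ⬝ᵥ colZ A i) {m : Fin d → ℤ} (hm : m ∈ NA A) : 0 ≤ h ⬝ᵥ m := by
  rw [dot_NA h hm]
  apply Finset.sum_nonneg
  intro i _
  exact mul_nonneg (by positivity) (hcol i)

/-- the rational columns -/
def aQ (A : Matrix (Fin d) (Fin n) ℤ) (i : Fin n) : Fin d → ℚ := fun k => (A k i : ℚ)

/-- cone membership for a list built from an indexed family -/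
lemma qcone_finRange_map {m : ℕ} : ∀ (f : Fin m → (Fin d → ℚ)) (x : Fin d → ℚ),
    x ∈ qcone ((List.finRange m).map f) ↔
      ∃ c : Fin m → ℚ, (∀ i, 0 ≤ c i) ∧ x = ∑ i, c i • f i := by
  induction m with
  | zero =>
    intro f x
    simp only [List.finRange_zero, List.map_nil, qcone_nil, Set.mem_singleton_iff]
    constructor
    · rintro rfl; exact ⟨0, fun i => le_refl 0, by simp⟩
    · rintro ⟨c, _, rfl⟩; simp
  | succ m ih =>
    intro f x
    rw [List.finRange_succ, List.map_cons, List.map_map, qcone_cons]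
    constructor
    · rintro ⟨t, v, ht, hv, rfl⟩
      obtain ⟨c, hc, rfl⟩ := (ih (f ∘ Fin.succ) v).mp hv
      refine ⟨Fin.cons t c, ?_, ?_⟩
      · intro i
        refine Fin.cases ?_ ?_ i
        · simpa using ht
        · intro j; simpa using hc j
      · rw [Fin.sum_univ_succ]
        simp [Function.comp]
    · rintro ⟨c, hc, rfl⟩
      refine ⟨c 0, ∑ j : Fin m, c j.succ • f j.succ, hc 0, ?_, ?_⟩
      · exact (ih (f ∘ Fin.succ) _).mpr ⟨fun j => c j.succ, fun j => hc j.succ, rfl⟩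
      · rw [Fin.sum_univ_succ]

/-- clear denominators of a rational vector -/
def intify (g : Fin d → ℚ) : Fin d → ℤ :=
  fun k => (g k).num * ((∏ j, (g j).den) / (g k).den : ℕ)

lemma intify_spec (g : Fin d → ℚ) (k : Fin d) :
    ((intify g k : ℤ) : ℚ) = ((∏ j, (g j).den : ℕ) : ℚ) * g k := by
  have hden : (((g k).den : ℚ)) ≠ 0 := by exact_mod_cast (g k).den_ne_zero
  have hdvd : (g k).den ∣ ∏ j, (g j).den := Finset.dvd_prod_of_mem _ (Finset.mem_univ k)
  have h2 : (((∏ j, (g j).den) / (g k).den : ℕ) : ℚ)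
      = ((∏ j, (g j).den : ℕ) : ℚ) / ((g k).den : ℚ) := Nat.cast_div hdvd hden
  have h3 : g k * ((g k).den : ℚ) = ((g k).num : ℚ) := Rat.mul_den_eq_num (g k)
  rw [intify, Int.cast_mul, Int.cast_natCast, h2, mul_div_assoc', div_eq_iff hden]
  nlinarith [h3]

lemma denProd_pos (g : Fin d → ℚ) : 0 < ((∏ j, (g j).den : ℕ) : ℚ) := by
  have : ∀ j ∈ Finset.univ, 0 < (g j).den := fun j _ => (g j).pos
  exact_mod_cast Finset.prod_pos this

/-- dot product of the integerized vector with an integer vector, rationally -/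
lemma intify_dot (g : Fin d → ℚ) (u : Fin d → ℤ) :
    ((intify g ⬝ᵥ u : ℤ) : ℚ) = ((∏ j, (g j).den : ℕ) : ℚ) * (g ⬝ᵥ (fun k => (u k : ℚ))) := by
  unfold dotProduct
  push_cast
  rw [Finset.mul_sum]
  apply Finset.sum_congr rfl
  intro k _
  rw [intify_spec]
  push_cast
  ring

lemma eq_zero_of_dot_cols_eq_zero {A : Matrix (Fin d) (Fin n) ℤ}
    (hgen : Submodule.span ℤ (Set.range (colZ A)) = ⊤)
    {g : Fin d → ℚ} (hzero : ∀ i, g ⬝ᵥ aQ A i = 0) : g = 0 := by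
  funext k
  have hk : (Pi.single k (1:ℤ) : Fin d → ℤ) ∈ Submodule.span ℤ (Set.range (colZ A)) := by
    rw [hgen]; trivial
  obtain ⟨c, hc⟩ := (Submodule.mem_span_range_iff_exists_fun ℤ).mp hk
  have hcast : (fun k' => (((Pi.single k (1:ℤ) : Fin d → ℤ)) k' : ℚ))
      = ∑ i, (c i : ℚ) • aQ A i := by
    funext k'
    rw [← hc]
    simp only [Finset.sum_apply, Pi.smul_apply, smul_eq_mul]
    push_cast
    rfl
  have h1 : g ⬝ᵥ (fun k' => (((Pi.single k (1:ℤ) : Fin d → ℤ)) k' : ℚ)) = g k := by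
    unfold dotProduct
    simp [Pi.single_apply]
  rw [hcast, dot_sum_right] at h1
  have h2 : ∀ i ∈ Finset.univ, g ⬝ᵥ ((c i : ℚ) • aQ A i) = 0 := by
    intro i _
    rw [dot_smul_right, hzero i, mul_zero]
  rw [Finset.sum_congr rfl h2, Finset.sum_const_zero] at h1
  simp [← h1]

theorem dual_package (A : Matrix (Fin d) (Fin n) ℤ)
    (hgen : Submodule.span ℤ (Set.range (colZ A)) = ⊤) :
    ∃ H : List (Fin d → ℤ),
      (∀ h ∈ H, ∀ i, 0 ≤ h ⬝ᵥ colZ A i) ∧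
      (∀ h ∈ H, ∃ i, 0 < h ⬝ᵥ colZ A i) ∧
      (∀ u : Fin d → ℤ, (∀ h ∈ H, 0 ≤ h ⬝ᵥ u) →
        ∃ c : Fin n → ℚ, (∀ i, 0 ≤ c i) ∧ (fun k => (u k : ℚ)) = ∑ i, c i • aQ A i) := by
  classical
  obtain ⟨L0, hL0⟩ := dd ((List.finRange n).map (aQ A))
  have hmemM : ∀ (y : Fin d → ℚ), y ∈ qcone L0 ↔ ∀ i, 0 ≤ y ⬝ᵥ aQ A i := by
    intro y
    rw [hL0]
    constructor
    · intro h i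
      exact h (aQ A i) (List.mem_map_of_mem (List.mem_finRange i))
    · rintro h b hb
      obtain ⟨i, _, rfl⟩ := List.mem_map.mp hb
      exact h i
  set L1 : List (Fin d → ℚ) := L0.filter (fun g => decide (g ≠ 0)) with hL1
  have memL1 : ∀ g, g ∈ L1 ↔ g ∈ L0 ∧ g ≠ 0 := by
    intro g; rw [hL1, List.mem_filter]; simp
  have colcast : ∀ i, (fun k => ((colZ A i k : ℤ) : ℚ)) = aQ A i := fun i => rfl
  refine ⟨L1.map intify, ?_, ?_, ?_⟩
  · rintro h hh i
    obtain ⟨g, hg, rfl⟩ := List.mem_map.mp hh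
    have hg0 : 0 ≤ g ⬝ᵥ aQ A i := (hmemM g).mp (mem_qcone_of_mem ((memL1 g).mp hg).1) i
    have := intify_dot g (colZ A i)
    rw [colcast] at this
    have h2 : (0:ℚ) ≤ ((intify g ⬝ᵥ colZ A i : ℤ) : ℚ) := by
      rw [this]
      exact mul_nonneg (denProd_pos g).le hg0
    exact_mod_cast h2
  · rintro h hh
    obtain ⟨g, hg, rfl⟩ := List.mem_map.mp hh
    by_contra hcon
    push_neg at hcon
    have hzero : ∀ i, g ⬝ᵥ aQ A i = 0 := by
      intro i
      have hle : intify g ⬝ᵥ colZ A i ≤ 0 := hcon i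
      have hge : 0 ≤ g ⬝ᵥ aQ A i := (hmemM g).mp (mem_qcone_of_mem ((memL1 g).mp hg).1) i
      have := intify_dot g (colZ A i)
      rw [colcast] at this
      have h2 : ((intify g ⬝ᵥ colZ A i : ℤ) : ℚ) ≤ 0 := by exact_mod_cast hle
      rw [this] at h2
      nlinarith [denProd_pos g]
    exact ((memL1 g).mp hg).2 (eq_zero_of_dot_cols_eq_zero hgen hzero)
  · intro u hu
    have hL0u : ∀ g ∈ L0, 0 ≤ g ⬝ᵥ (fun k => (u k : ℚ)) := by
      intro g hgL0
      by_cases hg0 : g = 0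
      · subst hg0; simp
      · have hmem : intify g ∈ L1.map intify :=
          List.mem_map_of_mem ((memL1 g).mpr ⟨hgL0, hg0⟩)
        have h2 : (0:ℚ) ≤ ((intify g ⬝ᵥ u : ℤ) : ℚ) := by exact_mod_cast hu _ hmem
        rw [intify_dot g u] at h2
        nlinarith [denProd_pos g]
    have humem : (fun k => (u k : ℚ)) ∈ qcone ((List.finRange n).map (aQ A)) := by
      by_contra hnot
      obtain ⟨y, hy1, hy2⟩ := qfarkas _ _ rfl _ hnot
      have hyL0 : y ∈ qcone L0 := (hL0 y).mpr hy1
      have : 0 ≤ y ⬝ᵥ (fun k => (u k : ℚ)) := by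
        refine qcone_nonneg (fun v => v ⬝ᵥ (fun k => (u k : ℚ))) (by simp) (fun t x v => ?_)
          L0 hL0u y hyL0
        show (t • x + v) ⬝ᵥ _ = _
        rw [add_dotProduct, smul_dotProduct]; simp [smul_eq_mul]
      linarith
    exact (qcone_finRange_map (aQ A) _).mp humem

/-- the conductor element: `w ∈ ℕA` with `u + w ∈ ℕA` for every lattice point
of the rational cone -/
theorem NA_conductor (A : Matrix (Fin d) (Fin n) ℤ)
    (hgen : Submodule.span ℤ (Set.range (colZ A)) = ⊤) :
    ∃ w ∈ NA A, ∀ u : Fin d → ℤ,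
      (∃ c : Fin n → ℚ, (∀ i, 0 ≤ c i) ∧ (fun k => (u k : ℚ)) = ∑ i, c i • aQ A i) →
      u + w ∈ NA A := by
  classical
  set R : ℕ := ∑ i, ∑ k, (A k i).natAbs with hR
  set B : Finset (Fin d → ℤ) := Fintype.piFinset (fun _ => Finset.Icc (-(R:ℤ)) (R:ℤ)) with hB
  have hrep : ∀ f : Fin d → ℤ, ∃ c : Fin n → ℤ, ∑ i, c i • colZ A i = f := by
    intro f
    have hf : f ∈ Submodule.span ℤ (Set.range (colZ A)) := by rw [hgen]; trivial
    exact (Submodule.mem_span_range_iff_exists_fun ℤ).mp hf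
  choose rep hrep' using hrep
  set qf : (Fin d → ℤ) → (Fin d → ℤ) :=
    fun f => ∑ i, (((-(rep f i)).toNat : ℤ)) • colZ A i with hqf
  have hqfNA : ∀ f, qf f ∈ NA A := fun f => ⟨fun i => (-(rep f i)).toNat, rfl⟩
  have hfqf : ∀ f, f + qf f ∈ NA A := by
    intro f
    refine ⟨fun i => (rep f i).toNat, ?_⟩
    rw [hqf]
    nth_rewrite 1 [← hrep' f]
    rw [← Finset.sum_add_distrib]
    apply Finset.sum_congr rfl
    intro i _
    rw [← add_smul]
    congr 1
    show rep f i + ((-(rep f i)).toNat : ℤ) = ((rep f i).toNat : ℤ)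
    omega
  set w : Fin d → ℤ := ∑ f ∈ B, qf f with hw
  have hwNA : w ∈ NA A := by
    rw [hw]
    apply Finset.sum_induction qf (· ∈ NA A) (fun _ _ => NA_add) (NA_zero A)
    intro f _
    exact hqfNA f
  have hBw : ∀ f ∈ B, f + w ∈ NA A := by
    intro f hf
    have : w = qf f + ∑ f' ∈ B.erase f, qf f' := (Finset.add_sum_erase B qf hf).symm
    rw [this, ← add_assoc]
    apply NA_add (hfqf f)
    apply Finset.sum_induction qf (· ∈ NA A) (fun _ _ => NA_add) (NA_zero A)
    intro f' _
    exact hqfNA f'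
  refine ⟨w, hwNA, ?_⟩
  rintro u ⟨c, hc, hcu⟩
  set γ : Fin n → ℕ := fun i => ⌊c i⌋₊ with hγ
  set m : Fin d → ℤ := ∑ i, (γ i : ℤ) • colZ A i with hm
  have hmNA : m ∈ NA A := ⟨γ, rfl⟩
  set f : Fin d → ℤ := u - m with hf
  have ht0 : ∀ i, 0 ≤ c i - (γ i : ℚ) := by
    intro i
    have := Nat.floor_le (hc i)
    rw [hγ]
    simpa using this
  have ht1 : ∀ i, c i - (γ i : ℚ) ≤ 1 := by
    intro i
    have := Nat.lt_floor_add_one (c i)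
    rw [hγ]
    simp only []
    linarith
  have hfB : f ∈ B := by
    rw [hB, Fintype.mem_piFinset]
    intro k
    rw [Finset.mem_Icc, ← abs_le]
    have habs : ((|f k| : ℤ) : ℚ) = |(f k : ℚ)| := by push_cast; rfl
    have hQ : |(f k : ℚ)| ≤ (R : ℚ) := by
      have hu : (u k : ℚ) = ∑ i, c i * (A k i : ℚ) := by
        have := congrFun hcu k
        simpa [Finset.sum_apply, aQ] using this
      have hmk : ((m k : ℤ) : ℚ) = ∑ i, (γ i : ℚ) * (A k i : ℚ) := by
        rw [hm]
        simp only [Finset.sum_apply, Pi.smul_apply, smul_eq_mul, colZ]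
        push_cast
        rfl
      have hfk : (f k : ℚ) = ∑ i, (c i - (γ i : ℚ)) * (A k i : ℚ) := by
        rw [hf]
        simp only [Pi.sub_apply]
        push_cast
        rw [hu, hmk, ← Finset.sum_sub_distrib]
        apply Finset.sum_congr rfl
        intro i _
        ring
      rw [hfk]
      calc |∑ i, (c i - (γ i : ℚ)) * (A k i : ℚ)|
          ≤ ∑ i, |(c i - (γ i : ℚ)) * (A k i : ℚ)| := Finset.abs_sum_le_sum_abs _ _
        _ ≤ ∑ i, |(A k i : ℚ)| := by
            apply Finset.sum_le_sum
            intro i _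
            rw [abs_mul, abs_of_nonneg (ht0 i)]
            calc (c i - (γ i : ℚ)) * |(A k i : ℚ)|
                ≤ 1 * |(A k i : ℚ)| :=
                  mul_le_mul_of_nonneg_right (ht1 i) (abs_nonneg _)
              _ = |(A k i : ℚ)| := one_mul _
        _ ≤ (R : ℚ) := by
            rw [hR]
            push_cast [Nat.cast_natAbs]
            apply Finset.sum_le_sum
            intro i _
            exact Finset.single_le_sum (f := fun k' => |((A k' i : ℤ) : ℚ)|)
              (fun k' _ => abs_nonneg _) (Finset.mem_univ k)
    rw [← habs] at hQ
    exact_mod_cast hQ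
  have : u + w = (f + w) + m := by
    rw [hf]; ext k; simp; ring
  rw [this]
  exact NA_add (hBw f hfB) hmNA

noncomputable def linPoly (h : Fin d → ℤ) : MvPolynomial (Fin d) ℂ :=
  ∑ k, MvPolynomial.C (h k : ℂ) * MvPolynomial.X k

lemma eval_linPoly (h : Fin d → ℤ) (x : Fin d → ℂ) :
    MvPolynomial.eval x (linPoly h) = ∑ k, (h k : ℂ) * x k := by
  rw [linPoly, map_sum]
  apply Finset.sum_congr rfl
  intro k _
  simp

lemma colZ_mem_NA (A : Matrix (Fin d) (Fin n) ℤ) (j : Fin n) : colZ A j ∈ NA A := by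
  refine ⟨fun i => if i = j then 1 else 0, ?_⟩
  rw [Finset.sum_eq_single j]
  · simp
  · intro i _ hij
    simp [hij]
  · intro h
    exact absurd (Finset.mem_univ j) h

lemma cast_dot_real (h u : Fin d → ℤ) :
    ((h ⬝ᵥ u : ℤ) : ℝ) = ∑ k, (h k : ℝ) * (u k : ℝ) := by
  unfold dotProduct
  push_cast
  rfl

lemma cast_dot_complex (h u : Fin d → ℤ) :
    ((h ⬝ᵥ u : ℤ) : ℂ) = ∑ k, (h k : ℂ) * (u k : ℂ) := by
  unfold dotProduct
  push_cast
  rfl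

/-- If the columns of `A` generate `ℤ^d` and `ℕA` is positive, then there is
`δ_A ∈ ℕA` with `(ℝ₊A + δ_A) ∩ sRes(A) = ∅` (inside `ℂ^d`). -/
theorem translated_cone_avoids_sRes (hd : 0 < d) (hn : 0 < n)
    (A : Matrix (Fin d) (Fin n) ℤ)
    (hgen : Submodule.span ℤ (Set.range (colZ A)) = ⊤)
    (hpos : ∀ m ∈ NA A, -m ∈ NA A → m = 0) :
    ∃ δ ∈ NA A, ∀ x ∈ RplusA A, rToC (x + fun k => (δ k : ℝ)) ∉ sRes A := by
  classical
  obtain ⟨H, hH1, hH2, hH3⟩ := dual_package A hgen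
  obtain ⟨w, hwNA, hwcond⟩ := NA_conductor A hgen
  set Cz : ℤ := 1 + (H.map (fun h => ∑ j, h ⬝ᵥ (colZ A j + w))).sum with hCz
  have hterm : ∀ h ∈ H, ∀ j : Fin n, 0 ≤ h ⬝ᵥ (colZ A j + w) :=
    fun h hh j => dot_NA_nonneg (hH1 h hh) (NA_add (colZ_mem_NA A j) hwNA)
  have hsum_nonneg : ∀ z ∈ H.map (fun h => ∑ j, h ⬝ᵥ (colZ A j + w)), 0 ≤ z := by
    intro z hz
    obtain ⟨h, hh, rfl⟩ := List.mem_map.mp hz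
    exact Finset.sum_nonneg (fun j _ => hterm h hh j)
  have hCz1 : 1 ≤ Cz := by
    rw [hCz]
    have := List.sum_nonneg hsum_nonneg
    linarith
  have hCzbig : ∀ h ∈ H, ∀ j : Fin n, h ⬝ᵥ (colZ A j + w) < Cz := by
    intro h hh j
    have h1 : h ⬝ᵥ (colZ A j + w) ≤ ∑ j', h ⬝ᵥ (colZ A j' + w) :=
      Finset.single_le_sum (fun j' _ => hterm h hh j') (Finset.mem_univ j)
    have h2 : (∑ j', h ⬝ᵥ (colZ A j' + w)) ≤ (H.map (fun h => ∑ j, h ⬝ᵥ (colZ A j + w))).sum :=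
      List.single_le_sum hsum_nonneg _ (List.mem_map_of_mem hh)
    rw [hCz]
    linarith
  -- the element δ
  set δz : Fin d → ℤ := ∑ i, ((Cz.toNat : ℤ)) • colZ A i with hδz
  have hδNA : δz ∈ NA A := ⟨fun _ => Cz.toNat, rfl⟩
  have hδdeep : ∀ h ∈ H, Cz ≤ h ⬝ᵥ δz := by
    intro h hh
    obtain ⟨i₀, hi₀⟩ := hH2 h hh
    rw [hδz, dot_sum_right]
    have hsum : ∀ i ∈ Finset.univ, h ⬝ᵥ ((Cz.toNat : ℤ) • colZ A i) = (Cz.toNat : ℤ) * (h ⬝ᵥ colZ A i) :=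
      fun i _ => dot_smul_right h _ _
    rw [Finset.sum_congr rfl hsum, ← Finset.mul_sum]
    have h1 : 1 ≤ ∑ i, h ⬝ᵥ colZ A i := by
      have h2 : h ⬝ᵥ colZ A i₀ ≤ ∑ i, h ⬝ᵥ colZ A i :=
        Finset.single_le_sum (fun i _ => hH1 h hh i) (Finset.mem_univ i₀)
      omega
    have h3 : (Cz.toNat : ℤ) = Cz := Int.toNat_of_nonneg (by linarith)
    nlinarith
  -- the deep-points lemma
  have hdeep : ∀ (j : Fin n) (m : Fin d → ℤ), m ∈ NA A → (∀ h ∈ H, Cz ≤ h ⬝ᵥ m) →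
      ∃ m' ∈ NA A, m = colZ A j + m' := by
    intro j m hm hdp
    have hu : ∀ h ∈ H, 0 ≤ h ⬝ᵥ (m - (colZ A j + w)) := by
      intro h hh
      rw [dotProduct_sub]
      have := hCzbig h hh j
      have := hdp h hh
      linarith
    obtain ⟨c, hc, hcu⟩ := hH3 _ hu
    refine ⟨(m - (colZ A j + w)) + w, hwcond _ ⟨c, hc, hcu⟩, ?_⟩
    ext k
    simp only [Pi.add_apply, Pi.sub_apply]
    ring
  refine ⟨δz, hδNA, ?_⟩
  intro x hx hmem
  obtain ⟨cx, hcx, hxc⟩ := hx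
  simp only [sRes, Set.mem_iUnion, Set.mem_image] at hmem
  obtain ⟨j, l, q, hq, heq⟩ := hmem
  have hqe : q = rToC (x + fun k => (δz k : ℝ)) + ((l : ℂ) + 1) • colC A j :=
    (eq_add_of_sub_eq heq)
  -- the polynomial
  set pj : MvPolynomial (Fin d) ℂ :=
    (H.map (fun h => ∏ v ∈ Finset.range Cz.toNat,
      (linPoly h - MvPolynomial.C (v : ℂ)))).prod with hpj
  -- it vanishes on the true degrees
  have hvanish : ∀ s ∈ NA A \ {m | ∃ m' ∈ NA A, m = colZ A j + m'},
      MvPolynomial.eval (zToC s) pj = 0 := by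
    intro s hs
    obtain ⟨hsNA, hsnot⟩ := hs
    have hnotdeep : ∃ h ∈ H, h ⬝ᵥ s < Cz := by
      by_contra hcon
      push_neg at hcon
      obtain ⟨m', hm', hmeq⟩ := hdeep j s hsNA hcon
      exact hsnot ⟨m', hm', hmeq⟩
    obtain ⟨h, hh, hlt⟩ := hnotdeep
    have hge : 0 ≤ h ⬝ᵥ s := dot_NA_nonneg (hH1 h hh) hsNA
    rw [hpj, map_list_prod]
    apply List.prod_eq_zero
    rw [List.map_map]
    refine List.mem_map.mpr ⟨h, hh, ?_⟩
    show MvPolynomial.eval (zToC s) (∏ v ∈ Finset.range Cz.toNat,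
      (linPoly h - MvPolynomial.C (v : ℂ))) = 0
    rw [map_prod]
    apply Finset.prod_eq_zero (Finset.mem_range.mpr (show (h ⬝ᵥ s).toNat < Cz.toNat by omega))
    rw [map_sub, eval_linPoly, MvPolynomial.eval_C]
    have : ∑ k, (h k : ℂ) * zToC s k = ((h ⬝ᵥ s : ℤ) : ℂ) := (cast_dot_complex h s).symm
    rw [this]
    rw [sub_eq_zero]
    have h4 : ((h ⬝ᵥ s).toNat : ℤ) = h ⬝ᵥ s := Int.toNat_of_nonneg hge
    exact_mod_cast congrArg (Int.cast : ℤ → ℂ) h4.symm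
  have hqz : MvPolynomial.eval q pj = 0 := by
    apply hq pj
    rintro y ⟨s, hs, rfl⟩
    exact hvanish s hs
  -- but it does not vanish at q
  apply absurd hqz
  rw [hpj, map_list_prod]
  intro hzero
  rw [List.map_map] at hzero
  have h0mem := (List.prod_eq_zero_iff).mp hzero
  obtain ⟨h, hh, hfac⟩ := List.mem_map.mp h0mem
  rw [Function.comp_apply, map_prod] at hfac
  obtain ⟨v, hv, hfac2⟩ := Finset.prod_eq_zero_iff.mp hfac
  rw [Finset.mem_range] at hv
  rw [map_sub, eval_linPoly, MvPolynomial.eval_C, sub_eq_zero] at hfac2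
  -- compute the evaluation as a real number
  set rr : ℝ := ∑ k, (h k : ℝ) * (x k + (δz k : ℝ) + ((l : ℝ) + 1) * (A k j : ℝ)) with hrr
  have hreal : ∑ k, (h k : ℂ) * q k = ((rr : ℝ) : ℂ) := by
    rw [hrr]
    push_cast
    apply Finset.sum_congr rfl
    intro k _
    rw [hqe]
    simp only [Pi.add_apply, Pi.smul_apply, smul_eq_mul, rToC, colC]
    push_cast
    ring
  rw [hreal] at hfac2
  -- split rr into three parts
  have hsplit : rr = (∑ k, (h k : ℝ) * x k) + ((h ⬝ᵥ δz : ℤ) : ℝ)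
      + ((l : ℝ) + 1) * ((h ⬝ᵥ colZ A j : ℤ) : ℝ) := by
    rw [hrr, cast_dot_real, cast_dot_real, Finset.mul_sum,
      ← Finset.sum_add_distrib, ← Finset.sum_add_distrib]
    apply Finset.sum_congr rfl
    intro k _
    show (h k : ℝ) * _ = _
    simp only [colZ]
    ring
  have hS1 : 0 ≤ ∑ k, (h k : ℝ) * x k := by
    have hform : ∑ k, (h k : ℝ) * x k = ∑ i, cx i * ((h ⬝ᵥ colZ A i : ℤ) : ℝ) := by
      calc ∑ k, (h k : ℝ) * x k
          = ∑ k, ∑ i, (h k : ℝ) * (cx i * (A k i : ℝ)) := by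
            apply Finset.sum_congr rfl
            intro k _
            rw [hxc]
            simp only [Finset.sum_apply, Pi.smul_apply, smul_eq_mul, colR]
            rw [Finset.mul_sum]
        _ = ∑ i, ∑ k, (h k : ℝ) * (cx i * (A k i : ℝ)) := Finset.sum_comm
        _ = ∑ i, cx i * ((h ⬝ᵥ colZ A i : ℤ) : ℝ) := by
            apply Finset.sum_congr rfl
            intro i _
            rw [cast_dot_real, Finset.mul_sum]
            apply Finset.sum_congr rfl
            intro k _
            show (h k : ℝ) * _ = _
            simp only [colZ]
            ring
    rw [hform]
    apply Finset.sum_nonneg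
    intro i _
    apply mul_nonneg (hcx i)
    exact_mod_cast hH1 h hh i
  have hS2 : (Cz : ℝ) ≤ ((h ⬝ᵥ δz : ℤ) : ℝ) := by exact_mod_cast hδdeep h hh
  have hS3 : (0:ℝ) ≤ ((h ⬝ᵥ colZ A j : ℤ) : ℝ) := by exact_mod_cast hH1 h hh j
  have hl1 : (0:ℝ) ≤ (l : ℝ) + 1 := by positivity
  have hvlt : (v : ℝ) < (Cz : ℝ) := by
    have : (v : ℤ) < Cz := by omega
    exact_mod_cast this
  have hrrge : (v : ℝ) < rr := by
    rw [hsplit]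
    nlinarith
  -- contradiction with hfac2 : (rr : ℂ) = v
  have : rr = (v : ℝ) := by
    have := congrArg Complex.re hfac2
    simpa using this
  linarith
end
end

section
/- Suppose the columns a_1,…,a_n of A generate ℤ^d as a ℤ-module and that ℕA is saturated. Then ℝ₊A ∩ sRes(A) = ∅, where ℝ₊A ⊆ ℝ^d is viewed as a subset of ℂ^d. -/
set_option maxHeartbeats 1000000
noncomputable section

open scoped BigOperators

variable {d n : ℕ}

section AuxFM

variable {d : ℕ}

def dotQ (h y : Fin d → ℚ) : ℚ := ∑ k, h k * y k

lemma dotQ_sub_smul (h y a : Fin d → ℚ) (t : ℚ) :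
    dotQ h (y - t • a) = dotQ h y - t * dotQ h a := by
  simp [dotQ, mul_sub, Finset.sum_sub_distrib, Finset.mul_sum]
  ring_nf
  congr 1
  funext k
  ring

lemma dotQ_combo (c c' : ℚ) (g h y : Fin d → ℚ) :
    dotQ (c • g - c' • h) y = c * dotQ g y - c' * dotQ h y := by
  simp only [dotQ, Pi.sub_apply, Pi.smul_apply, smul_eq_mul, sub_mul,
    Finset.sum_sub_distrib, Finset.mul_sum]
  congr 1 <;> exact Finset.sum_congr rfl fun k _ => by ring

lemma dotQ_sub (h u v : Fin d → ℚ) : dotQ h (u - v) = dotQ h u - dotQ h v := by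
  simp [dotQ, mul_sub, Finset.sum_sub_distrib]

def coneL : List (Fin d → ℚ) → Set (Fin d → ℚ)
  | [] => {0}
  | a :: L => {y | ∃ t : ℚ, 0 ≤ t ∧ y - t • a ∈ coneL L}

theorem fm (L : List (Fin d → ℚ)) :
    ∃ H : Finset (Fin d → ℚ), ∀ y, y ∈ coneL L ↔ ∀ h ∈ H, 0 ≤ dotQ h y := by
  induction L with
  | nil =>
      refine ⟨(Finset.univ.image fun k => Pi.single k (1:ℚ)) ∪
        (Finset.univ.image fun k => Pi.single k (-1:ℚ)), fun y => ?_⟩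
      have hdot : ∀ (k : Fin d) (c : ℚ), dotQ (Pi.single k c) y = c * y k := by
        intro k c
        simp [dotQ]
        rw [Finset.sum_eq_single k]
        · simp
        · intro b _ hb; simp [Pi.single_apply, hb]
        · simp
      constructor
      · rintro rfl h hh
        simp only [Finset.mem_union, Finset.mem_image] at hh
        rcases hh with ⟨k, _, rfl⟩ | ⟨k, _, rfl⟩ <;> simp [hdot]
      · intro hy
        have : ∀ k, y k = 0 := by
          intro k
          have h1 := hy (Pi.single k (1:ℚ)) (by simp [Finset.mem_union])
          have h2 := hy (Pi.single k (-1:ℚ)) (by simp [Finset.mem_union])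
          rw [hdot] at h1 h2
          linarith
        exact funext this
  | cons a L ih =>
      obtain ⟨H, hH⟩ := ih
      refine ⟨(H.filter fun h => 0 ≤ dotQ h a) ∪
        ((H ×ˢ H).filter fun p => 0 < dotQ p.1 a ∧ dotQ p.2 a < 0).image
          (fun p => dotQ p.1 a • p.2 - dotQ p.2 a • p.1), fun y => ?_⟩
      constructor
      · rintro ⟨t, ht, hmem⟩ h' hh'
        have hbase := (hH _).1 hmem
        simp only [Finset.mem_union, Finset.mem_filter, Finset.mem_image,
          Finset.mem_product] at hh'
        rcases hh' with ⟨hmemH, hpos⟩ | ⟨⟨g, h⟩, ⟨⟨hgH, hhH⟩, hga, hha⟩, rfl⟩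
        · have := hbase _ hmemH
          rw [dotQ_sub_smul] at this
          nlinarith
        · have h1 := hbase _ hgH
          have h2 := hbase _ hhH
          rw [dotQ_sub_smul] at h1 h2
          rw [dotQ_combo]
          nlinarith
      · intro hy
        by_cases hne : (H.filter fun h => 0 < dotQ h a).Nonempty
        · obtain ⟨h₀, hh₀, hmin⟩ := Finset.exists_min_image _ (fun h => dotQ h y / dotQ h a) hne
          simp only [Finset.mem_filter] at hh₀
          obtain ⟨hh₀H, hh₀a⟩ := hh₀
          have hh₀y : 0 ≤ dotQ h₀ y := by
            apply hy
            exact Finset.mem_union_left _ (Finset.mem_filter.2 ⟨hh₀H, le_of_lt hh₀a⟩)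
          refine ⟨dotQ h₀ y / dotQ h₀ a, div_nonneg hh₀y (le_of_lt hh₀a), (hH _).2 ?_⟩
          intro h hhH
          rw [dotQ_sub_smul]
          rcases lt_trichotomy (dotQ h a) 0 with hlt | heq | hgt
          · have hcross := hy (dotQ h₀ a • h - dotQ h a • h₀) (by
              apply Finset.mem_union_right
              exact Finset.mem_image.2 ⟨(h₀, h), Finset.mem_filter.2
                ⟨Finset.mem_product.2 ⟨hh₀H, hhH⟩, hh₀a, hlt⟩, rfl⟩)
            rw [dotQ_combo] at hcross
            rw [div_mul_eq_mul_div, sub_nonneg, div_le_iff₀ hh₀a]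
            nlinarith
          · have : 0 ≤ dotQ h y := hy h (Finset.mem_union_left _
              (Finset.mem_filter.2 ⟨hhH, le_of_eq heq.symm⟩))
            rw [heq]; linarith
          · have := hmin h (Finset.mem_filter.2 ⟨hhH, hgt⟩)
            rw [div_le_div_iff₀ hh₀a hgt] at this
            rw [div_mul_eq_mul_div, sub_nonneg, div_le_iff₀ hh₀a]
            nlinarith
        · refine ⟨∑ h ∈ H, max 0 (dotQ h y / dotQ h a), Finset.sum_nonneg fun h _ => le_max_left _ _,
            (hH _).2 ?_⟩
          intro h hhH
          rw [dotQ_sub_smul]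
          rcases lt_trichotomy (dotQ h a) 0 with hlt | heq | hgt
          · have hle : dotQ h y / dotQ h a ≤ ∑ g ∈ H, max 0 (dotQ g y / dotQ g a) := by
              calc dotQ h y / dotQ h a ≤ max 0 (dotQ h y / dotQ h a) := le_max_right _ _
              _ ≤ _ := Finset.single_le_sum (f := fun g => max 0 (dotQ g y / dotQ g a)) (fun g _ => le_max_left _ _) hhH
            have := mul_le_mul_of_nonpos_right hle (le_of_lt hlt)
            rw [div_mul_cancel₀] at this
            · linarith
            · exact ne_of_lt hlt
          · have : 0 ≤ dotQ h y := hy h (Finset.mem_union_left _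
              (Finset.mem_filter.2 ⟨hhH, le_of_eq heq.symm⟩))
            rw [heq]; linarith
          · exact absurd ⟨h, Finset.mem_filter.2 ⟨hhH, hgt⟩⟩ hne

lemma coneL_ofFn {n : ℕ} (v : Fin n → Fin d → ℚ) (y : Fin d → ℚ) :
    y ∈ coneL (List.ofFn v) ↔
      ∃ c : Fin n → ℚ, (∀ i, 0 ≤ c i) ∧ y = ∑ i, c i • v i := by
  induction n generalizing y with
  | zero =>
      simp only [List.ofFn_zero, coneL, Set.mem_singleton_iff]
      constructor
      · rintro rfl; exact ⟨fun i => 0, fun i => le_refl _, by simp⟩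
      · rintro ⟨c, _, rfl⟩; simp
  | succ n ih =>
      rw [List.ofFn_succ]
      constructor
      · rintro ⟨t, ht, hmem⟩
        obtain ⟨c, hc, hcy⟩ := (ih _ _).1 hmem
        refine ⟨Fin.cons t c, fun i => ?_, ?_⟩
        · refine Fin.cases ?_ ?_ i
          · simpa using ht
          · intro i'; simpa using hc i'
        · rw [Fin.sum_univ_succ]
          simp only [Fin.cons_zero, Fin.cons_succ]
          have : y - t • v 0 = ∑ i, c i • v i.succ := by simpa using hcy
          rw [← this]; abel
      · rintro ⟨c, hc, rfl⟩
        refine ⟨c 0, hc 0, (ih _ _).2 ⟨fun i => c i.succ, fun i => hc _, ?_⟩⟩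
        rw [Fin.sum_univ_succ]
        abel

lemma exists_int_scale (h : Fin d → ℚ) :
    ∃ (N : ℕ) (z : Fin d → ℤ), 0 < N ∧ ∀ k, (z k : ℚ) = (N : ℚ) * h k := by
  refine ⟨∏ k, (h k).den, fun k => (h k).num * ∏ k' ∈ Finset.univ.erase k, ((h k').den : ℤ),
    Finset.prod_pos fun k _ => (h k).pos, fun k => ?_⟩
  have hsplit : (∏ k', ((h k').den : ℚ)) = ((h k).den : ℚ) * ∏ k' ∈ Finset.univ.erase k, ((h k').den : ℚ) :=
    (Finset.mul_prod_erase _ _ (Finset.mem_univ k)).symm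
  have hk : ((h k).num : ℚ) = h k * (h k).den := (Rat.mul_den_eq_num _).symm
  push_cast
  rw [hsplit, hk]
  ring

end AuxFM

section AuxMain
variable {d n : ℕ}

theorem cone_avoids_sRes_of_saturated' (hd : 0 < d) (hn : 0 < n)
    (A : Matrix (Fin d) (Fin n) ℤ)
    (hgen : Submodule.span ℤ (Set.range (colZ A)) = ⊤)
    (hsat : NA A = {m : Fin d → ℤ | (fun k => (m k : ℚ)) ∈ QplusA A})
    -- assume FM-results as hypotheses for now:
    (H : Finset (Fin d → ℚ))
    (hQ : ∀ y : Fin d → ℚ, y ∈ QplusA A ↔ ∀ h ∈ H, 0 ≤ dotQ h y)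
    (N : (Fin d → ℚ) → ℕ) (z : (Fin d → ℚ) → Fin d → ℤ)
    (hN : ∀ h, 0 < N h) (hz : ∀ h k, (z h k : ℚ) = (N h : ℚ) * h k) :
    ∀ x ∈ RplusA A, rToC x ∉ sRes A := by
  intro x hx hmem
  -- unpack sRes membership
  simp only [sRes, Set.mem_iUnion, Set.mem_image] at hmem
  obtain ⟨j, l, q, hq, hxq⟩ := hmem
  have hqx : q = fun k => ((x k : ℂ)) + ((l : ℂ) + 1) * ((A k j : ℂ)) := by
    funext k
    have := congrFun hxq k
    simp only [Pi.sub_apply, Pi.smul_apply, smul_eq_mul, rToC, colC] at this ⊢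
    linear_combination this
  -- integer row combinations
  set W : (Fin d → ℚ) → Fin n → ℤ := fun h i => ∑ k, z h k * A k i with hW
  -- each column is in QplusA
  have hcolQ : ∀ i : Fin n, (fun k => ((A k i : ℚ))) ∈ QplusA A := by
    intro i
    refine ⟨Pi.single i 1, fun i' => ?_, ?_⟩
    · rcases eq_or_ne i' i with rfl | hne
      · simp
      · simp [Pi.single_eq_of_ne hne]
    · rw [Finset.sum_eq_single i]
      · simp
      · intro b _ hb
        simp [Pi.single_eq_of_ne hb]
      · simp
  have hcast : ∀ (h : Fin d → ℚ) (u : Fin d → ℤ),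
      ((∑ k, z h k * u k : ℤ) : ℚ) = (N h : ℚ) * dotQ h (fun k => (u k : ℚ)) := by
    intro h u
    push_cast
    rw [dotQ, Finset.mul_sum]
    exact Finset.sum_congr rfl fun k _ => by rw [hz h k]; ring
  have hWnn : ∀ h ∈ H, ∀ i, (0 : ℤ) ≤ W h i := by
    intro h hh i
    have h1 : 0 ≤ dotQ h (fun k => ((A k i : ℚ))) := (hQ _).1 (hcolQ i) h hh
    have h2 : (0:ℚ) ≤ ((W h i : ℤ) : ℚ) := by
      rw [hW, hcast]
      positivity
    exact_mod_cast h2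
  -- the polynomial
  set P : MvPolynomial (Fin d) ℂ := ∏ h ∈ H, ∏ c ∈ Finset.Ico (0:ℤ) (W h j),
    ((∑ k, MvPolynomial.C ((z h k : ℤ) : ℂ) * MvPolynomial.X k) - MvPolynomial.C ((c : ℤ) : ℂ)) with hP
  have heval : ∀ (s : Fin d → ℂ) (v : Fin d → ℤ) (c : ℤ),
      MvPolynomial.eval s ((∑ k, MvPolynomial.C ((v k : ℤ) : ℂ) * MvPolynomial.X k)
        - MvPolynomial.C ((c : ℤ) : ℂ)) = (∑ k, ((v k : ℤ) : ℂ) * s k) - ((c : ℤ) : ℂ) := by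
    intro s v c
    simp [map_sub, map_sum]
  -- vanishing on the set
  have hvanish : ∀ s ∈ zToC '' (NA A \ {m | ∃ m' ∈ NA A, m = colZ A j + m'}),
      MvPolynomial.eval s P = 0 := by
    rintro s ⟨m, ⟨hmNA, hmnot⟩, rfl⟩
    have hmQ : (fun k => ((m k : ℚ))) ∈ QplusA A := by
      rw [hsat] at hmNA; exact hmNA
    have hdiff : (fun k => (((m - colZ A j) k : ℚ))) ∉ QplusA A := by
      intro hcontra
      apply hmnot
      refine ⟨m - colZ A j, ?_, by ring⟩
      rw [hsat]; exact hcontra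
    have hsep : ∃ h ∈ H, dotQ h (fun k => (((m - colZ A j) k : ℚ))) < 0 := by
      by_contra hc
      push_neg at hc
      exact hdiff ((hQ _).2 fun h hh => hc h hh)
    obtain ⟨h, hhH, hneg⟩ := hsep
    have hsplit : (fun k => (((m - colZ A j) k : ℚ))) =
        (fun k => ((m k : ℚ))) - (fun k => ((A k j : ℚ))) := by
      funext k; simp [colZ]
    rw [hsplit, dotQ_sub, sub_neg] at hneg
    have hm0 : 0 ≤ dotQ h (fun k => ((m k : ℚ))) := (hQ _).1 hmQ h hhH
    set c₀ : ℤ := ∑ k, z h k * m k with hc₀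
    have hc₀cast : ((c₀ : ℤ) : ℚ) = (N h : ℚ) * dotQ h (fun k => ((m k : ℚ))) := hcast h m
    have hWcast : ((W h j : ℤ) : ℚ) = (N h : ℚ) * dotQ h (fun k => ((A k j : ℚ))) := hcast h (colZ A j)
    have hc₀nn : (0 : ℤ) ≤ c₀ := by
      have : (0:ℚ) ≤ ((c₀ : ℤ) : ℚ) := by rw [hc₀cast]; positivity
      exact_mod_cast this
    have hc₀lt : c₀ < W h j := by
      have hNpos : (0:ℚ) < (N h : ℚ) := by exact_mod_cast hN h
      have : ((c₀ : ℤ) : ℚ) < ((W h j : ℤ) : ℚ) := by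
        rw [hc₀cast, hWcast]
        exact mul_lt_mul_of_pos_left hneg hNpos
      exact_mod_cast this
    rw [hP]
    rw [map_prod]
    apply Finset.prod_eq_zero hhH
    rw [map_prod]
    apply Finset.prod_eq_zero (Finset.mem_Ico.2 ⟨hc₀nn, hc₀lt⟩)
    rw [heval]
    rw [sub_eq_zero]
    rw [hc₀]
    push_cast [zToC]
    rfl
  -- nonvanishing at q
  have hq0 : MvPolynomial.eval q P = 0 := hq P hvanish
  obtain ⟨cR, hcR, hxsum⟩ := hx
  have hnonzero : MvPolynomial.eval q P ≠ 0 := by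
    rw [hP, map_prod]
    apply Finset.prod_ne_zero_iff.2
    intro h hhH
    rw [map_prod]
    apply Finset.prod_ne_zero_iff.2
    intro c hc
    rw [heval]
    obtain ⟨hcnn, hclt⟩ := Finset.mem_Ico.1 hc
    -- real value
    set r : ℝ := (∑ k, (z h k : ℝ) * x k) + ((l : ℝ) + 1) * ((W h j : ℤ) : ℝ) with hr
    have hsum : (∑ k, ((z h k : ℤ) : ℂ) * q k) = ((r : ℝ) : ℂ) := by
      rw [hqx, hr]
      push_cast [hW]
      rw [Finset.mul_sum, ← Finset.sum_add_distrib]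
      exact Finset.sum_congr rfl fun k _ => by ring
    rw [hsum]
    have hS : 0 ≤ ∑ k, (z h k : ℝ) * x k := by
      have hswap : (∑ k, (z h k : ℝ) * x k) = ∑ i, cR i * ((W h i : ℤ) : ℝ) := by
        rw [hxsum]
        simp only [Finset.sum_apply, Pi.smul_apply, smul_eq_mul, colR, Finset.mul_sum]
        rw [Finset.sum_comm]
        push_cast [hW]
        refine Finset.sum_congr rfl fun i _ => ?_
        rw [Finset.mul_sum]
        refine Finset.sum_congr rfl fun k _ => ?_
        ring
      rw [hswap]
      apply Finset.sum_nonneg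
      intro i _
      have : (0:ℝ) ≤ ((W h i : ℤ) : ℝ) := by exact_mod_cast hWnn h hhH i
      exact mul_nonneg (hcR i) this
    have hrgt : ((c : ℤ) : ℝ) < r := by
      rw [hr]
      have hWc : ((c : ℤ) : ℝ) + 1 ≤ ((W h j : ℤ) : ℝ) := by exact_mod_cast hclt
      have hl : (0:ℝ) ≤ (l : ℝ) := Nat.cast_nonneg l
      have hcnn' : (0:ℝ) ≤ ((c : ℤ) : ℝ) := by exact_mod_cast hcnn
      nlinarith [hS]
    intro hzero
    rw [← Complex.ofReal_intCast, ← Complex.ofReal_sub, Complex.ofReal_eq_zero, sub_eq_zero] at hzero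
    exact absurd hzero.symm (ne_of_lt hrgt)
  exact hnonzero hq0

end AuxMain

/-- If the columns of `A` generate `ℤ^d` and `ℕA` is saturated
(`ℕA = ℚ₊A ∩ ℤ^d`), then `ℝ₊A ∩ sRes(A) = ∅` (inside `ℂ^d`). -/
theorem cone_avoids_sRes_of_saturated (hd : 0 < d) (hn : 0 < n)
    (A : Matrix (Fin d) (Fin n) ℤ)
    (hgen : Submodule.span ℤ (Set.range (colZ A)) = ⊤)
    (hsat : NA A = {m : Fin d → ℤ | (fun k => (m k : ℚ)) ∈ QplusA A}) :
    ∀ x ∈ RplusA A, rToC x ∉ sRes A := by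
  obtain ⟨H, hH⟩ := fm (List.ofFn fun i => fun k => ((A k i : ℚ)))
  have hQ : ∀ y : Fin d → ℚ, y ∈ QplusA A ↔ ∀ h ∈ H, 0 ≤ dotQ h y := by
    intro y
    rw [← hH y, coneL_ofFn]
    exact Iff.rfl
  choose N z hN hz using fun h : Fin d → ℚ => exists_int_scale h
  exact cone_avoids_sRes_of_saturated' hd hn A hgen hsat H hQ N z hN hz
end
end

section
/- Suppose the columns a_1,…,a_n of A generate ℤ^d as a ℤ-module. Then 𝔻sRes(A) ∩ (−(ℝ₊A)°) = ∅, where (ℝ₊A)° denotes the topological interior of the cone ℝ₊A in ℝ^d and −(ℝ₊A)° ⊆ ℝ^d is viewed as a subset of ℂ^d. -/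
noncomputable section

open scoped BigOperators

variable {d n : ℕ}

/-- The complex linear span of the proper face of `ℕA` determined by a linear
functional `φ` (the span of the columns on which `φ` vanishes). -/
def faceSpan (A : Matrix (Fin d) (Fin n) ℤ) (φ : (Fin d → ℝ) →ₗ[ℝ] ℝ) :
    Submodule ℂ (Fin d → ℂ) :=
  Submodule.span ℂ {v : Fin d → ℂ | ∃ i : Fin n, φ (colR A i) = 0 ∧ v = colC A i}

/-- `𝔻sRes(A) = ⋃_F ((ℤ^d ∩ ℚ₊A) + ℂF)`, the union over all proper faces `F`
of `ℕA`. -/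
def DsRes (A : Matrix (Fin d) (Fin n) ℤ) : Set (Fin d → ℂ) :=
  {z | ∃ φ : (Fin d → ℝ) →ₗ[ℝ] ℝ,
    (∀ i, 0 ≤ φ (colR A i)) ∧ (∃ j, 0 < φ (colR A j)) ∧
    ∃ m : Fin d → ℤ, (fun k => (m k : ℚ)) ∈ QplusA A ∧
      ∃ v ∈ faceSpan A φ, z = zToC m + v}

/-- If the columns of `A` generate `ℤ^d`, then
`𝔻sRes(A) ∩ (−(ℝ₊A)°) = ∅` (inside `ℂ^d`). -/
theorem DsRes_avoids_neg_interior_cone (hd : 0 < d) (hn : 0 < n)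
    (A : Matrix (Fin d) (Fin n) ℤ)
    (hgen : Submodule.span ℤ (Set.range (colZ A)) = ⊤) :
    ∀ x ∈ interior (RplusA A), rToC (-x) ∉ DsRes A := by
  intro x hx hmem
  obtain ⟨φ, hpos, ⟨j, hj⟩, m, ⟨c, hc, hcm⟩, v, hv, heq⟩ := hmem
  -- complexification of φ
  set ψ : (Fin d → ℂ) →ₗ[ℂ] ℂ :=
    ∑ k : Fin d, ((φ (fun j => if k = j then (1:ℝ) else 0) : ℝ) : ℂ) •
      (LinearMap.proj k : (Fin d → ℂ) →ₗ[ℂ] ℂ) with hψdef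
  have hψR : ∀ y : Fin d → ℝ, ψ (rToC y) = ((φ y : ℝ) : ℂ) := by
    intro y
    have h1 : φ y = ∑ k : Fin d, y k * φ (fun j => if k = j then (1:ℝ) else 0) := by
      simpa [smul_eq_mul] using LinearMap.pi_apply_eq_sum_univ φ y
    rw [hψdef, LinearMap.sum_apply, h1]
    push_cast
    refine Finset.sum_congr rfl fun k _ => ?_
    simp [rToC, mul_comm]
  have hcolRC : ∀ i, colC A i = rToC (colR A i) := by
    intro i; funext k; simp [colC, colR, rToC]
  have hψv : ψ v = 0 := by
    have hsub : faceSpan A φ ≤ LinearMap.ker ψ := by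
      rw [faceSpan, Submodule.span_le]
      rintro _ ⟨i, hφi, rfl⟩
      simp only [SetLike.mem_coe, LinearMap.mem_ker]
      rw [hcolRC, hψR, hφi]
      simp
    exact LinearMap.mem_ker.mp (hsub hv)
  -- apply ψ to the equation
  set mr : Fin d → ℝ := fun k => (m k : ℝ) with hmr
  have hzr : zToC m = rToC mr := by funext k; simp [zToC, rToC, hmr]
  have hkey : φ (-x) = φ mr := by
    have := congrArg ψ heq
    rw [map_add, hψv, add_zero, hψR, hzr, hψR] at this
    exact_mod_cast this
  -- φ is nonnegative on the cone
  have hφcone : ∀ y ∈ RplusA A, 0 ≤ φ y := by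
    rintro y ⟨cy, hcy, rfl⟩
    rw [map_sum]
    refine Finset.sum_nonneg fun i _ => ?_
    rw [map_smul, smul_eq_mul]
    exact mul_nonneg (hcy i) (hpos i)
  -- φ mr ≥ 0
  have hmrcone : mr ∈ RplusA A := by
    have hpt : ∀ k, (m k : ℚ) = ∑ i, c i * (A k i : ℚ) := by
      intro k
      have := congrFun hcm k
      simpa [Finset.sum_apply, smul_eq_mul] using this
    refine ⟨fun i => (c i : ℝ), fun i => by simpa using (Rat.cast_nonneg (K := ℝ)).mpr (hc i), ?_⟩
    funext k
    have := hpt k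
    have h2 : (m k : ℝ) = ∑ i, (c i : ℝ) * (A k i : ℝ) := by exact_mod_cast this
    simpa [hmr, colR, Finset.sum_apply, smul_eq_mul] using h2
  have hmrpos : 0 ≤ φ mr := hφcone _ hmrcone
  -- φ x > 0 since x is interior
  obtain ⟨ε, hε, hball⟩ := Metric.isOpen_iff.mp isOpen_interior x hx
  have hcolj_ne : colR A j ≠ 0 := by
    intro h0
    rw [h0, map_zero] at hj
    exact lt_irrefl 0 hj
  have hnorm : 0 < ‖colR A j‖ := norm_pos_iff.mpr hcolj_ne
  set t : ℝ := ε / (2 * ‖colR A j‖) with ht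
  have htpos : 0 < t := div_pos hε (by positivity)
  have hy : x - t • colR A j ∈ RplusA A := by
    apply interior_subset
    apply hball
    rw [Metric.mem_ball, dist_eq_norm]
    have : x - t • colR A j - x = -(t • colR A j) := by ring_nf
    rw [this, norm_neg, norm_smul, Real.norm_eq_abs, abs_of_pos htpos, ht]
    rw [div_mul_eq_mul_div, mul_comm]
    rw [div_lt_iff₀ (by positivity)]
    calc ‖colR A j‖ * ε < 2 * ‖colR A j‖ * ε := by nlinarith
      _ = ε * (2 * ‖colR A j‖) := by ring
  have hφy := hφcone _ hy
  rw [map_sub, map_smul, smul_eq_mul] at hφy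
  have hφx : 0 < φ x := by nlinarith [mul_pos htpos hj]
  rw [map_neg] at hkey
  linarith
end
end

section
/- If ℕA is positive, then the cone ℝ₊A is strongly convex; that is, if x ∈ ℝ^d satisfies x ∈ ℝ₊A and −x ∈ ℝ₊A, then x = 0. -/
noncomputable section

open scoped BigOperators

variable {d n : ℕ}

lemma li_transfer {ι : Type*} [Fintype ι] [DecidableEq ι] {κ : Type*} [Fintype κ] {v : ι → (κ → ℚ)}
    (h : LinearIndependent ℚ v) :
    LinearIndependent ℝ (fun i => (fun k => ((v i k : ℝ)))) := by
  classical
  set G : Matrix ι ι ℚ := Matrix.of fun i j => ∑ k, v i k * v j k with hG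
  have hdet : G.det ≠ 0 := by
    intro h0
    obtain ⟨t, ht0, htv⟩ := (Matrix.exists_mulVec_eq_zero_iff).2 h0
    have hzero : ∀ k, ∑ j, t j * v j k = 0 := by
      have hq : ∑ i, t i * (G.mulVec t) i = 0 := by simp [htv]
      have hq2 : ∑ k, (∑ j, t j * v j k) ^ 2 = 0 := by
        rw [← hq]
        simp only [Matrix.mulVec, dotProduct, hG, Matrix.of_apply, sq,
          Finset.sum_mul, Finset.mul_sum]
        rw [Finset.sum_comm]
        refine Finset.sum_congr rfl fun i _ => ?_
        rw [Finset.sum_comm]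
        refine Finset.sum_congr rfl fun j _ => Finset.sum_congr rfl fun k _ => by ring
      intro k
      have := (Finset.sum_eq_zero_iff_of_nonneg
        (fun k _ => sq_nonneg (∑ j, t j * v j k))).1 hq2 k (Finset.mem_univ k)
      exact pow_eq_zero_iff (two_ne_zero) |>.1 this
    apply ht0
    funext i
    refine Fintype.linearIndependent_iff.1 h t ?_ i
    funext k
    simpa [Finset.sum_apply, smul_eq_mul] using hzero k
  have hdetR : ((G.map (fun q : ℚ => (q : ℝ))).det) ≠ 0 := by
    have h2 := (Rat.castHom ℝ).map_det G
    rw [RingHom.mapMatrix_apply] at h2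
    have h3 : G.map (⇑(Rat.castHom ℝ)) = G.map (fun q : ℚ => (q : ℝ)) := rfl
    rw [h3] at h2
    rw [← h2]
    simpa using hdet
  rw [Fintype.linearIndependent_iff]
  intro t ht i
  by_contra hti
  apply hdetR
  refine (Matrix.exists_mulVec_eq_zero_iff).1 ⟨t, ?_, ?_⟩
  · intro h0; exact hti (congrFun h0 i)
  · have hcoord : ∀ k, ∑ j, t j * (v j k : ℝ) = 0 := by
      intro k
      have := congrFun ht k
      simpa [Finset.sum_apply, smul_eq_mul] using this
    funext i'
    show ∑ j, (G.map (fun q : ℚ => (q : ℝ))) i' j * t j = 0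
    simp only [Matrix.map_apply, hG, Matrix.of_apply]
    push_cast
    simp only [Finset.sum_mul]
    rw [Finset.sum_comm]
    refine Finset.sum_eq_zero fun k _ => ?_
    have : ∑ j, ((v i' k : ℝ) * (v j k : ℝ)) * t j = (v i' k : ℝ) * ∑ j, t j * (v j k : ℝ) := by
      rw [Finset.mul_sum]
      exact Finset.sum_congr rfl fun j _ => by ring
    rw [this, hcoord k, mul_zero]

lemma cV_mem_span_basis {κ : Type*} [Fintype κ] {P : Submodule ℚ (κ → ℚ)} {r : ℕ} (B : Module.Basis (Fin r) ℚ P)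
    {v : κ → ℚ} (hv : v ∈ P) :
    (fun k => ((v k : ℝ))) ∈
      Submodule.span ℝ (Set.range fun l => (fun k => (((B l : κ → ℚ) k : ℝ)))) := by
  set c : Fin r → ℚ := fun l => B.repr ⟨v, hv⟩ l with hc
  have hrepr : ∑ l, c l • ((B l : κ → ℚ)) = v := by
    have h1 := B.sum_repr ⟨v, hv⟩
    have := congrArg (Submodule.subtype P) h1
    rw [map_sum] at this
    simpa only [map_smul, Submodule.subtype_apply, hc] using this
  have hkey : (fun k => ((v k : ℝ))) =
      ∑ l, ((c l : ℝ)) • (fun k => (((B l : κ → ℚ) k : ℝ))) := by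
    funext k
    have h2 := congrFun hrepr k
    simp only [Finset.sum_apply, Pi.smul_apply, smul_eq_mul] at h2
    rw [Finset.sum_apply]
    simp only [Pi.smul_apply, smul_eq_mul]
    rw [← h2]
    push_cast
    rfl
  rw [hkey]
  exact Submodule.sum_mem _ fun l _ =>
    Submodule.smul_mem _ _ (Submodule.subset_span ⟨l, rfl⟩)

lemma ker_span {m : Type*} [Fintype m] {n : ℕ} (M : Matrix m (Fin n) ℚ) {b : Fin n → ℝ}
    (hb : (M.map (fun q : ℚ => (q : ℝ))).mulVec b = 0) :
    b ∈ Submodule.span ℝ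
      ((fun q : Fin n → ℚ => (fun k => ((q k : ℝ)))) '' {q | M.mulVec q = 0}) := by
  classical
  set F := M.mulVecLin with hF
  set G := (M.map (fun q : ℚ => (q : ℝ))).mulVecLin with hGdef
  set K := LinearMap.ker F with hK
  have hcompat : ∀ q : Fin n → ℚ, G (fun k => ((q k : ℝ))) = fun k => ((F q k : ℝ)) := by
    intro q
    funext i
    simp only [hGdef, hF, Matrix.mulVecLin_apply, Matrix.mulVec, dotProduct,
      Matrix.map_apply]
    push_cast
    rfl
  set r := Module.finrank ℚ K with hr
  set B : Module.Basis (Fin r) ℚ K := Module.finBasis ℚ K with hB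
  set u : Fin r → (Fin n → ℚ) := fun l => (B l : Fin n → ℚ) with hu
  have hLIu : LinearIndependent ℚ u :=
    B.linearIndependent.map' K.subtype (Submodule.ker_subtype K)
  set cu : Fin r → (Fin n → ℝ) := fun l => fun k => ((u l k : ℝ)) with hcu
  have hLIcu : LinearIndependent ℝ cu := li_transfer hLIu
  set W : Submodule ℝ (Fin n → ℝ) :=
    Submodule.span ℝ ((fun q : Fin n → ℚ => (fun k => ((q k : ℝ)))) '' {q | M.mulVec q = 0}) with hW
  have hWeq : W = Submodule.span ℝ (Set.range cu) := by
    apply le_antisymm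
    · rw [hW, Submodule.span_le]
      rintro _ ⟨q, hq, rfl⟩
      exact cV_mem_span_basis B hq
    · rw [Submodule.span_le]
      rintro _ ⟨l, rfl⟩
      exact Submodule.subset_span ⟨u l, (B l).2, rfl⟩
  have hWker : W ≤ LinearMap.ker G := by
    rw [hW, Submodule.span_le]
    rintro _ ⟨q, hq, rfl⟩
    have hq0 : F q = 0 := hq
    simp only [SetLike.mem_coe, LinearMap.mem_ker]
    rw [hcompat q, hq0]
    funext k; simp
  have hrange : Module.finrank ℚ (LinearMap.range F) ≤ Module.finrank ℝ (LinearMap.range G) := by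
    have Brg : Module.Basis (Fin (Module.finrank ℚ (LinearMap.range F))) ℚ (LinearMap.range F) :=
      Module.finBasis ℚ _
    have hLIw : LinearIndependent ℚ (fun l => (Brg l : m → ℚ)) :=
      Brg.linearIndependent.map' (LinearMap.range F).subtype (Submodule.ker_subtype _)
    have hLIcw : LinearIndependent ℝ
        (fun l => (fun k => (((Brg l : m → ℚ) k : ℝ)))) := li_transfer hLIw
    have hsub : Submodule.span ℝ
        (Set.range fun l => (fun k => (((Brg l : m → ℚ) k : ℝ)))) ≤ LinearMap.range G := by
      rw [Submodule.span_le]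
      rintro _ ⟨l, rfl⟩
      obtain ⟨q, hq⟩ := (Brg l).2
      refine ⟨fun k => ((q k : ℝ)), ?_⟩
      rw [hcompat q]
      funext k
      rw [hq]
    calc Module.finrank ℚ (LinearMap.range F)
        = Module.finrank ℝ (Submodule.span ℝ
            (Set.range fun l => (fun k => (((Brg l : m → ℚ) k : ℝ))))) := by
          simpa using (finrank_span_eq_card hLIcw).symm
      _ ≤ Module.finrank ℝ (LinearMap.range G) := Submodule.finrank_mono hsub
  have hkerG : Module.finrank ℝ (LinearMap.ker G) ≤ r := by
    have h1 := LinearMap.finrank_range_add_finrank_ker G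
    have h2 := LinearMap.finrank_range_add_finrank_ker F
    rw [Module.finrank_fin_fun] at h1 h2
    have hKK : Module.finrank ℚ (LinearMap.ker F) = r := by rw [hr, hK]
    omega
  have hWrank : Module.finrank ℝ W = r := by
    rw [hWeq]
    simpa using finrank_span_eq_card hLIcu
  have hfinal : W = LinearMap.ker G :=
    Submodule.eq_of_le_of_finrank_le hWker (by rw [hWrank]; exact hkerG)
  show b ∈ W
  rw [hfinal]
  simp only [LinearMap.mem_ker, hGdef, Matrix.mulVecLin_apply]
  exact hb

lemma exists_nat_rel (hn : 0 < n) (A : Matrix (Fin d) (Fin n) ℤ) (b : Fin n → ℝ)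
    (hb0 : ∀ i, 0 ≤ b i) (hrel : ∑ i, b i • colR A i = 0) :
    ∃ γ : Fin n → ℕ, (∑ i, (γ i : ℤ) • colZ A i = 0) ∧ ∀ j, 0 < b j → 0 < γ j := by
  classical
  haveI : Nonempty (Fin n) := Fin.pos_iff_nonempty.1 hn
  set M : Matrix (Sum (Fin d) (Fin n)) (Fin n) ℚ := Matrix.of fun j i =>
    Sum.elim (fun k => (A k i : ℚ))
      (fun i0 => if 0 < b i0 then 0 else (if i = i0 then 1 else 0)) j with hM
  have hbker : (M.map (fun q : ℚ => (q : ℝ))).mulVec b = 0 := by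
    funext j
    cases j with
    | inl k =>
      have h1 := congrFun hrel k
      simp only [Finset.sum_apply, Pi.smul_apply, smul_eq_mul, colR, Pi.zero_apply] at h1
      simp only [Matrix.mulVec, dotProduct, Matrix.map_apply, hM, Matrix.of_apply,
        Sum.elim_inl, Pi.zero_apply]
      rw [← h1]
      exact Finset.sum_congr rfl fun i _ => by push_cast; ring
    | inr i0 =>
      by_cases h : 0 < b i0
      · simp [Matrix.mulVec, dotProduct, hM, h]
      · have hb' : b i0 = 0 := le_antisymm (not_lt.1 h) (hb0 i0)
        simp only [Matrix.mulVec, dotProduct, Matrix.map_apply, hM, Matrix.of_apply,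
          Sum.elim_inr, if_neg h, Pi.zero_apply]
        rw [Finset.sum_eq_single i0 (fun i _ hij => by simp [if_neg hij])
          (fun h' => absurd (Finset.mem_univ i0) h')]
        simp [hb']
  have hspan := ker_span M hbker
  rw [Submodule.mem_span_set'] at hspan
  obtain ⟨N, t, g, hsum⟩ := hspan
  have hgl : ∀ l, ∃ w : Fin n → ℚ, M.mulVec w = 0 ∧
      (fun k => ((w k : ℝ))) = (g l : Fin n → ℝ) := by
    intro l
    obtain ⟨w, hw, hweq⟩ := (g l).2
    exact ⟨w, hw, hweq⟩
  choose v hvker hveq using hgl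
  have hbj : ∀ j, b j = ∑ l, t l * (v l j : ℝ) := by
    intro j
    have := congrFun hsum j
    simp only [Finset.sum_apply, Pi.smul_apply, smul_eq_mul] at this
    rw [← this]
    exact Finset.sum_congr rfl fun l _ => by rw [← hveq l]
  -- choose the tolerance
  set ε : ℝ := Finset.univ.inf' Finset.univ_nonempty (fun j => if 0 < b j then b j else 1) with hε
  have hεpos : 0 < ε := by
    rw [hε, Finset.lt_inf'_iff]
    intro j _
    by_cases h : 0 < b j <;> simp [h]
  have hεle : ∀ j, 0 < b j → ε ≤ b j := by
    intro j hj
    have := Finset.inf'_le (b := j) (fun j => if 0 < b j then b j else 1) (Finset.mem_univ j)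
    rwa [if_pos hj] at this
  set C : ℝ := 1 + ∑ l, ∑ k, |(v l k : ℝ)| with hC
  have hCpos : 0 < C := by
    have : (0:ℝ) ≤ ∑ l, ∑ k, |(v l k : ℝ)| :=
      Finset.sum_nonneg fun l _ => Finset.sum_nonneg fun k _ => abs_nonneg _
    linarith
  have hCj : ∀ j, ∑ l, |(v l j : ℝ)| ≤ C - 1 := by
    intro j
    rw [hC]
    have : ∀ l, |(v l j : ℝ)| ≤ ∑ k, |(v l k : ℝ)| := fun l =>
      Finset.single_le_sum (f := fun k => |(v l k : ℝ)|) (fun k _ => abs_nonneg _)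
        (Finset.mem_univ j)
    simpa using Finset.sum_le_sum fun l _ => this l
  set δ : ℝ := ε / C with hδdef
  have hδpos : 0 < δ := div_pos hεpos hCpos
  have hrat : ∀ l, ∃ s : ℚ, t l < (s:ℝ) ∧ (s:ℝ) < t l + δ := by
    intro l
    exact exists_rat_btwn (by linarith)
  choose s hs1 hs2 using hrat
  set q : Fin n → ℚ := ∑ l, s l • v l with hq
  have hqker : M.mulVec q = 0 := by
    have : M.mulVec q = M.mulVecLin (∑ l, s l • v l) := rfl
    rw [this, map_sum]
    refine Finset.sum_eq_zero fun l _ => ?_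
    rw [map_smul]
    simp [Matrix.mulVecLin_apply, hvker l]
  have hqj : ∀ j, (q j : ℝ) = ∑ l, (s l : ℝ) * (v l j : ℝ) := by
    intro j
    rw [hq]
    simp only [Finset.sum_apply, Pi.smul_apply, smul_eq_mul]
    push_cast
    rfl
  have hclose : ∀ j, |(q j : ℝ) - b j| ≤ δ * (C - 1) := by
    intro j
    have hdiff : (q j : ℝ) - b j = ∑ l, ((s l : ℝ) - t l) * (v l j : ℝ) := by
      rw [hqj j, hbj j, ← Finset.sum_sub_distrib]
      exact Finset.sum_congr rfl fun l _ => by ring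
    rw [hdiff]
    calc |∑ l, ((s l : ℝ) - t l) * (v l j : ℝ)|
        ≤ ∑ l, |((s l : ℝ) - t l) * (v l j : ℝ)| := Finset.abs_sum_le_sum_abs _ _
      _ ≤ ∑ l, δ * |(v l j : ℝ)| := by
          refine Finset.sum_le_sum fun l _ => ?_
          rw [abs_mul]
          refine mul_le_mul_of_nonneg_right ?_ (abs_nonneg _)
          rw [abs_of_pos (by linarith [hs1 l])]
          linarith [hs2 l]
      _ = δ * ∑ l, |(v l j : ℝ)| := by rw [Finset.mul_sum]
      _ ≤ δ * (C - 1) := mul_le_mul_of_nonneg_left (hCj j) (le_of_lt hδpos)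
  have hδC : δ * (C - 1) < ε := by
    have : δ * C = ε := div_mul_cancel₀ ε (ne_of_gt hCpos)
    nlinarith
  have hqpos : ∀ j, 0 < b j → 0 < q j := by
    intro j hj
    have h1 := hclose j
    have h2 := hεle j hj
    have : (0:ℝ) < (q j : ℝ) := by
      have := abs_le.1 h1
      linarith [this.1]
    exact_mod_cast this
  have hq0 : ∀ j, ¬ 0 < b j → q j = 0 := by
    intro j hj
    have := congrFun hqker (Sum.inr j)
    simp only [Matrix.mulVec, dotProduct, hM, Matrix.of_apply, Sum.elim_inr,
      if_neg hj, Pi.zero_apply] at this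
    rw [Finset.sum_eq_single j (fun i _ hij => by simp [if_neg hij])
      (fun h' => absurd (Finset.mem_univ j) h')] at this
    simpa using this
  have hqnonneg : ∀ j, 0 ≤ q j := by
    intro j
    by_cases h : 0 < b j
    · exact le_of_lt (hqpos j h)
    · rw [hq0 j h]
  -- clear denominators
  set D : ℕ := ∏ i, (q i).den with hD
  have hDpos : 0 < D := Finset.prod_pos fun i _ => (q i).pos
  set z : Fin n → ℤ := fun i => (q i).num * ((D / (q i).den : ℕ) : ℤ) with hz
  have hdvd : ∀ i, (q i).den ∣ D := fun i => Finset.dvd_prod_of_mem _ (Finset.mem_univ i)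
  have hzq : ∀ i, (z i : ℚ) = q i * D := by
    intro i
    have hden : ((q i).den : ℚ) ≠ 0 := by exact_mod_cast (q i).den_nz
    have hqi : ((q i).num : ℚ) = q i * (q i).den := by
      have h := Rat.num_div_den (q i)
      exact (div_eq_iff hden).1 h
    have hDden : ((q i).den : ℚ) * ((D / (q i).den : ℕ) : ℚ) = (D : ℚ) := by
      exact_mod_cast congrArg (Nat.cast : ℕ → ℚ) (Nat.mul_div_cancel' (hdvd i))
    show ((((q i).num * ((D / (q i).den : ℕ) : ℤ)) : ℤ) : ℚ) = q i * D
    rw [Int.cast_mul, Int.cast_natCast, hqi, mul_assoc, hDden]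
  have hz0 : ∀ i, 0 ≤ z i := by
    intro i
    have h1 : (0:ℚ) ≤ (z i : ℚ) := by
      rw [hzq i]
      exact mul_nonneg (hqnonneg i) (by positivity)
    exact_mod_cast h1
  have hzpos : ∀ j, 0 < b j → 0 < z j := by
    intro j hj
    have h1 : (0:ℚ) < (z j : ℚ) := by
      rw [hzq j]
      exact mul_pos (hqpos j hj) (by exact_mod_cast hDpos)
    exact_mod_cast h1
  have hzrel : ∑ i, z i • colZ A i = 0 := by
    funext k
    have hrow := congrFun hqker (Sum.inl k)
    simp only [Matrix.mulVec, dotProduct, hM, Matrix.of_apply, Sum.elim_inl,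
      Pi.zero_apply] at hrow
    have hcast : ((∑ i, z i • colZ A i) k : ℚ) = ∑ i, (z i : ℚ) * (A k i : ℚ) := by
      simp only [Finset.sum_apply, Pi.smul_apply, smul_eq_mul, colZ]
      push_cast
      rfl
    have hzero : ∑ i, (z i : ℚ) * (A k i : ℚ) = 0 := by
      calc ∑ i, (z i : ℚ) * (A k i : ℚ) = ∑ i, (D : ℚ) * ((A k i : ℚ) * q i) := by
            refine Finset.sum_congr rfl fun i _ => ?_
            rw [hzq i]; ring
        _ = (D : ℚ) * ∑ i, (A k i : ℚ) * q i := by rw [Finset.mul_sum]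
        _ = 0 := by rw [hrow, mul_zero]
    have : ((∑ i, z i • colZ A i) k : ℚ) = 0 := by rw [hcast, hzero]
    exact_mod_cast this
  refine ⟨fun i => (z i).toNat, ?_, ?_⟩
  · rw [← hzrel]
    exact Finset.sum_congr rfl fun i _ => by rw [Int.toNat_of_nonneg (hz0 i)]
  · intro j hj
    have h := hzpos j hj
    show 0 < (z j).toNat
    omega

/-- If `ℕA` is positive, then the real cone `ℝ₊A` is strongly convex:
`x ∈ ℝ₊A` and `−x ∈ ℝ₊A` imply `x = 0`. -/
theorem cone_strongly_convex_of_positive (hd : 0 < d) (hn : 0 < n)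
    (A : Matrix (Fin d) (Fin n) ℤ)
    (hpos : ∀ m ∈ NA A, -m ∈ NA A → m = 0) :
    ∀ x : Fin d → ℝ, x ∈ RplusA A → -x ∈ RplusA A → x = 0 := by
  classical
  intro x hx hnx
  obtain ⟨c, hc0, hxeq⟩ := hx
  obtain ⟨c', hc'0, hxeq'⟩ := hnx
  set b : Fin n → ℝ := fun i => c i + c' i with hb
  have hb0 : ∀ i, 0 ≤ b i := fun i => add_nonneg (hc0 i) (hc'0 i)
  have hrel : ∑ i, b i • colR A i = 0 := by
    have h1 : ∑ i, b i • colR A i = (∑ i, c i • colR A i) + ∑ i, c' i • colR A i := by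
      rw [← Finset.sum_add_distrib]
      exact Finset.sum_congr rfl fun i _ => add_smul _ _ _
    rw [h1, ← hxeq, ← hxeq']
    exact add_neg_cancel x
  obtain ⟨γ, hγrel, hγpos⟩ := exists_nat_rel hn A b hb0 hrel
  have hcol : ∀ j, 0 < b j → colR A j = 0 := by
    intro j hj
    have hγj : 0 < γ j := hγpos j hj
    have hmem : ((γ j : ℤ) • colZ A j) ∈ NA A := by
      refine ⟨Pi.single j (γ j), ?_⟩
      rw [Finset.sum_eq_single j (fun i _ hij => by simp [Pi.single_eq_of_ne hij])
        (fun h' => absurd (Finset.mem_univ j) h')]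
      simp
    have hmem' : -((γ j : ℤ) • colZ A j) ∈ NA A := by
      refine ⟨Function.update γ j 0, ?_⟩
      have hupd : ∀ i, ((Function.update γ j 0 i : ℕ) : ℤ) • colZ A i
          = Function.update (fun i => ((γ i : ℤ)) • colZ A i) j 0 i := by
        intro i
        rcases eq_or_ne i j with rfl | hij
        · simp
        · simp [Function.update_of_ne hij]
      rw [Finset.sum_congr rfl fun i _ => hupd i, Finset.sum_update_of_mem (Finset.mem_univ j),
        zero_add, Finset.sdiff_singleton_eq_erase]
      have hsplit : (γ j : ℤ) • colZ A j + ∑ i ∈ Finset.univ.erase j, (γ i : ℤ) • colZ A i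
          = ∑ i, (γ i : ℤ) • colZ A i :=
        Finset.add_sum_erase Finset.univ (fun i => ((γ i : ℤ)) • colZ A i) (Finset.mem_univ j)
      rw [hγrel] at hsplit
      exact neg_eq_of_add_eq_zero_right hsplit
    have h0 := hpos _ hmem hmem'
    have hzcol : colZ A j = 0 := by
      rcases smul_eq_zero.1 h0 with h | h
      · exact absurd h (by exact_mod_cast hγj.ne')
      · exact h
    funext k
    have := congrFun hzcol k
    simp only [colZ, Pi.zero_apply] at this
    simp [colR, this]
  rw [hxeq]
  refine Finset.sum_eq_zero fun i _ => ?_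
  rcases (hc0 i).eq_or_lt with h | h
  · rw [← h, zero_smul]
  · have hbi : 0 < b i := by
      have := hc'0 i
      simp only [hb]
      linarith
    rw [hcol i hbi, smul_zero]
end
end

section
/- Let V ⊆ ℂ^n be a ℂ-linear subspace, let L ⊆ V be an additive subgroup whose ℂ-linear span equals V, and let γ ∈ ℂ^n. If a polynomial f ∈ ℂ[x_1,…,x_n] satisfies f(w + l) = f(w) for every w ∈ γ + V and every l ∈ L, then f is constant on the affine subspace γ + V; that is, f(γ + v) = f(γ) for all v ∈ V. -/
noncomputable section

open MvPolynomial

/-- If a polynomial `f` is invariant under translation by all integer multiples of `l`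
(starting from `w`), then it is invariant under all complex multiples of `l`. -/
lemma invariant_of_int_invariant (n : ℕ) (f : MvPolynomial (Fin n) ℂ)
    (w l : Fin n → ℂ) (h : ∀ k : ℤ, eval (w + (k : ℂ) • l) f = eval w f) (t : ℂ) :
    eval (w + t • l) f = eval w f := by
  set p : Polynomial ℂ :=
    MvPolynomial.eval₂ Polynomial.C (fun i => Polynomial.C (w i) + Polynomial.C (l i) * Polynomial.X) f with hp
  have heval : ∀ s : ℂ, Polynomial.eval s p = eval (w + s • l) f := by
    intro s
    rw [hp]
    have := MvPolynomial.eval₂_comp_left (Polynomial.evalRingHom s) Polynomial.C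
      (fun i => Polynomial.C (w i) + Polynomial.C (l i) * Polynomial.X) f
    simp only [Polynomial.coe_evalRingHom] at this
    rw [this]
    have hcomp : (Polynomial.evalRingHom s).comp Polynomial.C = RingHom.id ℂ := by
      ext x; simp
    rw [hcomp]
    have h2 : (Polynomial.eval s ∘ fun i => Polynomial.C (w i) + Polynomial.C (l i) * Polynomial.X)
        = fun i => (w + s • l) i := by
      funext i
      simp only [Function.comp_apply, Polynomial.eval_add, Polynomial.eval_mul,
        Polynomial.eval_C, Polynomial.eval_X, Pi.add_apply, Pi.smul_apply, smul_eq_mul]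
      ring
    rw [h2]
    rfl
  have hconst : p = Polynomial.C (eval w f) := by
    have hroots : {x : ℂ | (p - Polynomial.C (eval w f)).IsRoot x}.Infinite := by
      apply Set.Infinite.mono (s := Set.range (Int.cast : ℤ → ℂ))
      · rintro _ ⟨k, rfl⟩
        simp [Polynomial.IsRoot, heval, h k]
      · exact Set.infinite_range_of_injective Int.cast_injective
    have := Polynomial.eq_zero_of_infinite_isRoot _ hroots
    have := sub_eq_zero.mp this
    exact this
  have := heval t
  rw [hconst] at this
  simp at this
  exact this.symm

/-- Let `V ⊆ ℂ^n` be a linear subspace, `L ⊆ V` an additive subgroup whose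
`ℂ`-span is `V`, and `γ ∈ ℂ^n`. If `f` is `L`-translation invariant on the
affine subspace `γ + V`, then `f` is constant on `γ + V`. -/
theorem constant_on_affine_subspace_of_lattice_invariant
    (n : ℕ) (V : Submodule ℂ (Fin n → ℂ)) (L : AddSubgroup (Fin n → ℂ))
    (hLV : (L : Set (Fin n → ℂ)) ⊆ (V : Set (Fin n → ℂ)))
    (hspan : Submodule.span ℂ (L : Set (Fin n → ℂ)) = V)
    (γ : Fin n → ℂ) (f : MvPolynomial (Fin n) ℂ)
    (hf : ∀ v ∈ V, ∀ l ∈ L, eval (γ + v + l) f = eval (γ + v) f) :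
    ∀ v ∈ V, eval (γ + v) f = eval γ f := by
  -- invariance under complex multiples of lattice elements
  have key : ∀ w ∈ V, ∀ l ∈ L, ∀ t : ℂ, eval (γ + w + t • l) f = eval (γ + w) f := by
    intro w hw l hl t
    apply invariant_of_int_invariant
    intro k
    have hkl : (k : ℂ) • l = (k • l : Fin n → ℂ) := by
      rw [Int.cast_smul_eq_zsmul]
    rw [hkl]
    exact hf w hw (k • l) (zsmul_mem hl k)
  -- main induction over the span
  have main : ∀ v ∈ Submodule.span ℂ (L : Set (Fin n → ℂ)), ∀ t : ℂ, ∀ w ∈ V,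
      eval (γ + w + t • v) f = eval (γ + w) f := by
    intro v hv
    induction hv using Submodule.span_induction with
    | mem x hx => exact fun t w hw => key w hw x hx t
    | zero => intro t w hw; simp
    | add x y hx hy ihx ihy =>
        intro t w hw
        have hxV : x ∈ V := hspan ▸ hx
        have h1 : γ + w + t • (x + y) = γ + (w + t • x) + t • y := by
          rw [smul_add]; ring
        rw [h1, ihy t (w + t • x) (V.add_mem hw (V.smul_mem t hxV)), ← add_assoc, ihx t w hw]
    | smul c x hx ihx =>
        intro t w hw
        have : t • (c • x) = (t * c) • x := by rw [smul_smul]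
        rw [this, ihx (t * c) w hw]
  intro v hv
  have := main v (hspan ▸ hv) 1 0 V.zero_mem
  simpa using this
end
end

section
/- Let A be a d×n integer matrix of rank d, let β ∈ ℂ^d, and let γ ∈ ℂ^n satisfy Aγ = β. Let I ⊆ ℂ[x_1,…,x_n] be the ideal generated by the d affine-linear polynomials Σ_{i=1}^n A_{k i} x_i − β_k, k = 1,…,d. Suppose f ∈ ℂ[x_1,…,x_n] has the property that for every l ∈ ℤ^n with A l = 0, the polynomial obtained by substituting x_i ↦ x_i + l_i into f, minus f itself, belongs to I. Then f − f(γ) ∈ I (here f(γ) ∈ ℂ is regarded as a constant polynomial). -/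
noncomputable section

open MvPolynomial

private lemma periodic_eval (r : Polynomial ℂ) (h : ∀ s : ℂ, r.eval (s+1) = r.eval s) (c : ℂ) :
    r.eval c = r.eval 0 := by
  have hn : ∀ m : ℕ, r.eval (m : ℂ) = r.eval 0 := by
    intro m; induction m with
    | zero => simp
    | succ k ih => push_cast; rw [h]; exact ih
  have h0 : r - Polynomial.C (r.eval 0) = 0 := by
    apply Polynomial.eq_zero_of_infinite_isRoot
    apply (Set.infinite_range_of_injective (Nat.cast_injective : Function.Injective (Nat.cast : ℕ → ℂ))).mono
    rintro _ ⟨m, rfl⟩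
    simp [Polynomial.IsRoot, hn]
  have := congrArg (Polynomial.eval c) h0
  simpa [sub_eq_zero] using this

private lemma clear_denoms (m : ℕ) (q : Fin m → ℚ) :
    ∃ N : ℕ, (N : ℚ) ≠ 0 ∧ ∃ l : Fin m → ℤ, ∀ i, (l i : ℚ) = (N : ℚ) * q i := by
  classical
  refine ⟨∏ j, (q j).den, by positivity, fun i => (q i).num * (((∏ j, (q j).den) / (q i).den : ℕ) : ℤ), ?_⟩
  intro i
  obtain ⟨M, hM⟩ := Finset.dvd_prod_of_mem (fun j => (q j).den) (Finset.mem_univ i)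
  have hden : ((q i).den : ℚ) ≠ 0 := by exact_mod_cast (q i).den_nz
  have hnum : ((q i).num : ℚ) = q i * (q i).den := (div_eq_iff hden).mp (Rat.num_div_den (q i))
  have hdiv : (∏ j, (q j).den) / (q i).den = M := by
    rw [hM]; exact Nat.mul_div_cancel_left _ (q i).pos
  simp only [hdiv]
  push_cast [hnum, hM]
  ring


private lemma ker_mem_span_int_ker (d n : ℕ) (A : Matrix (Fin d) (Fin n) ℤ)
    (v : Fin n → ℂ) (hv : (A.map (Int.cast : ℤ → ℂ)).mulVec v = 0) :
    v ∈ Submodule.span ℂ {w : Fin n → ℂ | ∃ l : Fin n → ℤ,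
      A.mulVec l = 0 ∧ w = fun i => (l i : ℂ)} := by
  classical
  set V : Submodule ℚ ℂ := Submodule.span ℚ (Set.range v) with hV
  haveI : FiniteDimensional ℚ V := FiniteDimensional.span_of_finite ℚ (Set.finite_range v)
  set b := Module.finBasis ℚ V with hb
  set u : Fin n → V := fun i => ⟨v i, Submodule.subset_span (Set.mem_range_self i)⟩ with hu
  set q : Fin (Module.finrank ℚ V) → Fin n → ℚ := fun t i => b.repr (u i) t with hq
  -- kernel relations over ℚ
  have hker : ∀ t k, ∑ i, (A k i : ℚ) * q t i = 0 := by
    intro t k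
    have h0 : (∑ i, ((A k i : ℚ)) • u i) = (0 : V) := by
      apply Subtype.ext
      have := congrFun hv k
      simpa [u, Matrix.mulVec, dotProduct, Matrix.map_apply,
        Rat.smul_def, mul_comm] using this
    have := congrArg (fun w : V => (b.repr w) t) h0
    simpa [map_sum, Finsupp.finset_sum_apply, q, mul_comm] using this
  -- v as combination
  have hrepr : ∀ i, v i = ∑ t, ((b t : ℂ)) * ((q t i : ℚ) : ℂ) := by
    intro i
    have h1 := congrArg (Subtype.val) (b.sum_repr (u i))
    have h2 : ((∑ t, (b.repr (u i)) t • b t : V) : ℂ) = ∑ t, ((q t i : ℚ) : ℂ) * (b t : ℂ) := by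
      push_cast
      refine Finset.sum_congr rfl (fun t _ => ?_)
      simp [q, Rat.smul_def]
    rw [h2] at h1
    have h3 : (u i : ℂ) = v i := rfl
    rw [h3] at h1
    rw [← h1]
    exact (Finset.sum_congr rfl (fun t _ => mul_comm _ _)).symm
  have hv' : v = ∑ t, ((b t : ℂ)) • (fun i => ((q t i : ℚ) : ℂ)) := by
    funext i
    simpa [Finset.sum_apply] using hrepr i
  rw [hv']
  apply Submodule.sum_mem
  intro t _
  apply Submodule.smul_mem
  -- each rational kernel vector is a ℂ-multiple of an integer kernel vector
  obtain ⟨N, hN, l, hl⟩ := clear_denoms n (q t)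
  have hAl : A.mulVec l = 0 := by
    funext k
    have : ((A.mulVec l) k : ℚ) = 0 := by
      have : ∑ i, (A k i : ℚ) * (l i : ℚ) = (N : ℚ) * ∑ i, (A k i : ℚ) * q t i := by
        rw [Finset.mul_sum]
        exact Finset.sum_congr rfl (fun i _ => by rw [hl i]; ring)
      simpa [Matrix.mulVec, dotProduct, hker t k] using this
    exact_mod_cast this
  have hNC : ((N : ℚ) : ℂ) ≠ 0 := by exact_mod_cast hN
  have : (fun i => ((q t i : ℚ) : ℂ)) = ((N : ℂ))⁻¹ • (fun i => ((l i : ℤ) : ℂ)) := by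
    funext i
    have : ((l i : ℚ) : ℂ) = ((N : ℚ) : ℂ) * ((q t i : ℚ) : ℂ) := by exact_mod_cast congrArg (Rat.cast : ℚ → ℂ) (hl i)
    simp only [Pi.smul_apply, smul_eq_mul]
    push_cast at this
    rw [this]
    have hNC' : (N : ℂ) ≠ 0 := by exact_mod_cast hN
    field_simp
  rw [this]
  exact Submodule.smul_mem _ _ (Submodule.subset_span ⟨l, hAl, rfl⟩)


private lemma exists_right_inverse (d n : ℕ) (Aℂ : Matrix (Fin d) (Fin n) ℂ)
    (hrank : Aℂ.rank = d) : ∃ Q : Matrix (Fin n) (Fin d) ℂ, Aℂ * Q = 1 := by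
  classical
  have hsurj : LinearMap.range Aℂ.mulVecLin = ⊤ := by
    apply Submodule.eq_top_of_finrank_eq
    rw [← Matrix.rank] at *
    simp [hrank, Module.finrank_pi]
  obtain ⟨g, hg⟩ := LinearMap.exists_rightInverse_of_surjective _ hsurj
  refine ⟨LinearMap.toMatrix' g, ?_⟩
  have h1 : Matrix.toLin' (Aℂ * LinearMap.toMatrix' g) = LinearMap.id := by
    rw [Matrix.toLin'_mul, Matrix.toLin'_toMatrix', Matrix.toLin'_apply']
    exact hg
  have h2 := congrArg LinearMap.toMatrix' h1
  rwa [LinearMap.toMatrix'_toLin', LinearMap.toMatrix'_id] at h2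


private lemma eval_span_zero (d n : ℕ) (A : Matrix (Fin d) (Fin n) ℤ) (β : Fin d → ℂ)
    {g : MvPolynomial (Fin n) ℂ}
    (hg : g ∈ Ideal.span (Set.range fun k : Fin d =>
        (∑ i : Fin n, C ((A k i : ℂ)) * X i) - C (β k)))
    (w : Fin n → ℂ) (hw : (A.map (Int.cast : ℤ → ℂ)).mulVec w = β) :
    eval w g = 0 := by
  have hle : Ideal.span (Set.range fun k : Fin d =>
      (∑ i : Fin n, C ((A k i : ℂ)) * X i) - C (β k)) ≤ RingHom.ker (eval w) := by
    rw [Ideal.span_le]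
    rintro _ ⟨k, rfl⟩
    have hk := congrFun hw k
    simp only [Matrix.mulVec, dotProduct, Matrix.map_apply] at hk
    simp [RingHom.mem_ker, hk]
  exact hle hg

private lemma eval_step (d n : ℕ) (A : Matrix (Fin d) (Fin n) ℤ) (β : Fin d → ℂ)
    (f : MvPolynomial (Fin n) ℂ)
    (hf : ∀ l : Fin n → ℤ, A.mulVec l = 0 →
      (aeval (fun i : Fin n => X i + C ((l i : ℂ)))) f - f ∈
        Ideal.span (Set.range fun k : Fin d =>
          (∑ i : Fin n, C ((A k i : ℂ)) * X i) - C (β k)))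
    (l : Fin n → ℤ) (hl : A.mulVec l = 0) (c : ℂ) (y : Fin n → ℂ)
    (hy : (A.map (Int.cast : ℤ → ℂ)).mulVec y = β) :
    eval (fun i => y i + c * (l i : ℂ)) f = eval y f := by
  classical
  have hlC : (A.map (Int.cast : ℤ → ℂ)).mulVec (fun i => (l i : ℂ)) = 0 := by
    funext k
    have := congrFun hl k
    simp only [Matrix.mulVec, dotProduct, Matrix.map_apply, Pi.zero_apply] at this ⊢
    exact_mod_cast congrArg (Int.cast : ℤ → ℂ) this
  -- the points y + s·l all lie in the fiber
  have hpt : ∀ s : ℂ, (A.map (Int.cast : ℤ → ℂ)).mulVec (fun i => y i + (l i : ℂ) * s) = β := by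
    intro s
    have : (fun i => y i + (l i : ℂ) * s) = y + s • (fun i => (l i : ℂ)) := by
      funext i; simp [mul_comm]
    rw [this, Matrix.mulVec_add, Matrix.mulVec_smul, hlC, hy]
    simp
  set r : Polynomial ℂ :=
    aeval (fun i => Polynomial.C (y i) + Polynomial.C ((l i : ℂ)) * Polynomial.X) f with hr
  have hrs : ∀ s : ℂ, r.eval s = eval (fun i => y i + (l i : ℂ) * s) f := by
    intro s
    have h1 : (Polynomial.aeval s : Polynomial ℂ →ₐ[ℂ] ℂ) r
        = aeval (fun i => (Polynomial.aeval s)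
            (Polynomial.C (y i) + Polynomial.C ((l i : ℂ)) * Polynomial.X)) f := by
      exact DFunLike.congr_fun (comp_aeval (R := ℂ)
        (fun i => Polynomial.C (y i) + Polynomial.C ((l i : ℂ)) * Polynomial.X)
        (Polynomial.aeval s)) f
    simpa using h1
  have hper : ∀ s : ℂ, r.eval (s+1) = r.eval s := by
    intro s
    rw [hrs, hrs]
    -- LHS point = (y + s l) + l
    have h2 : eval (fun i => y i + (l i : ℂ) * (s+1)) f
        = eval (fun i => y i + (l i : ℂ) * s) ((aeval (fun i : Fin n => X i + C ((l i : ℂ)))) f) := by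
      have h3 : (eval (fun i => y i + (l i : ℂ) * s) : MvPolynomial (Fin n) ℂ →+* ℂ)
          ((aeval (fun i : Fin n => X i + C ((l i : ℂ)))) f)
          = aeval (fun i => (aeval (fun j => y j + (l j : ℂ) * s) : MvPolynomial (Fin n) ℂ →ₐ[ℂ] ℂ)
              (X i + C ((l i : ℂ)))) f := by
        exact DFunLike.congr_fun (comp_aeval (R := ℂ)
          (fun i : Fin n => X i + C ((l i : ℂ)))
          (aeval (fun j => y j + (l j : ℂ) * s))) f
      rw [h3]
      have h5 : (fun i => (aeval (fun j => y j + (l j : ℂ) * s) : MvPolynomial (Fin n) ℂ →ₐ[ℂ] ℂ)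
              (X i + C ((l i : ℂ)))) = fun i => y i + (l i : ℂ) * (s+1) := by
        funext i
        simp only [map_add, aeval_X, aeval_C, Algebra.algebraMap_self, RingHom.id_apply]
        ring
      rw [h5]
      rfl
    rw [h2]
    have h4 := eval_span_zero d n A β (hf l hl) (fun i => y i + (l i : ℂ) * s) (hpt s)
    rw [map_sub] at h4
    exact sub_eq_zero.mp h4
  have := periodic_eval r hper c
  rw [hrs c, hrs 0] at this
  simpa [mul_comm] using this


private lemma eval_eq_on_fiber (d n : ℕ) (A : Matrix (Fin d) (Fin n) ℤ) (β : Fin d → ℂ)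
    (γ : Fin n → ℂ) (hγ : (A.map (Int.cast : ℤ → ℂ)).mulVec γ = β)
    (f : MvPolynomial (Fin n) ℂ)
    (hf : ∀ l : Fin n → ℤ, A.mulVec l = 0 →
      (aeval (fun i : Fin n => X i + C ((l i : ℂ)))) f - f ∈
        Ideal.span (Set.range fun k : Fin d =>
          (∑ i : Fin n, C ((A k i : ℂ)) * X i) - C (β k)))
    (x : Fin n → ℂ) (hx : (A.map (Int.cast : ℤ → ℂ)).mulVec x = β) :
    eval x f = eval γ f := by
  classical
  set Aℂ := A.map (Int.cast : ℤ → ℂ) with hAC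
  have hv : Aℂ.mulVec (x - γ) = 0 := by
    rw [Matrix.mulVec_sub, hx, hγ, sub_self]
  have hspan := ker_mem_span_int_ker d n A (x - γ) hv
  -- strengthened invariance along the span
  have key : ∀ v ∈ Submodule.span ℂ {w : Fin n → ℂ | ∃ l : Fin n → ℤ,
      A.mulVec l = 0 ∧ w = fun i => (l i : ℂ)},
      Aℂ.mulVec v = 0 ∧ ∀ (c : ℂ) (y : Fin n → ℂ), Aℂ.mulVec y = β →
        eval (y + c • v) f = eval y f := by
    intro v hvmem
    induction hvmem using Submodule.span_induction with
    | mem w hw =>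
      obtain ⟨l, hl, rfl⟩ := hw
      constructor
      · funext k
        have := congrFun hl k
        simp only [Matrix.mulVec, dotProduct, Matrix.map_apply, Pi.zero_apply,
          hAC] at this ⊢
        exact_mod_cast congrArg (Int.cast : ℤ → ℂ) this
      · intro c y hy
        have := eval_step d n A β f hf l hl c y hy
        have e : (y + c • fun i => (l i : ℂ)) = fun i => y i + c * (l i : ℂ) := by
          funext i; simp [smul_eq_mul]
        rw [e]; exact this
    | zero => simp
    | add v w _ _ ihv ihw =>
      refine ⟨by rw [Matrix.mulVec_add, ihv.1, ihw.1, add_zero], ?_⟩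
      intro c y hy
      have h1 : y + c • (v + w) = (y + c • v) + c • w := by
        rw [smul_add]; abel
      rw [h1]
      have hy' : Aℂ.mulVec (y + c • v) = β := by
        rw [Matrix.mulVec_add, Matrix.mulVec_smul, ihv.1, hy]; simp
      rw [ihw.2 c _ hy', ihv.2 c y hy]
    | smul a v _ ihv =>
      refine ⟨by rw [Matrix.mulVec_smul, ihv.1, smul_zero], ?_⟩
      intro c y hy
      rw [smul_smul]
      exact ihv.2 (c * a) y hy
  have := (key _ hspan).2 1 γ hγ
  simpa using this

/-- Key algebraic step for rigidity of morphisms between GKZ-systems: if `A` is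
a `d × n` integer matrix of rank `d`, `Aγ = β`, and `f(x + l) − f(x)` lies in
the ideal `I = (∑_i A_{k i} x_i − β_k : k)` for every integer vector `l` with
`A l = 0`, then `f − f(γ) ∈ I`. -/
theorem sub_eval_mem_span_of_translation_invariance
    (d n : ℕ) (A : Matrix (Fin d) (Fin n) ℤ)
    (hrank : (A.map (Int.cast : ℤ → ℂ)).rank = d)
    (β : Fin d → ℂ) (γ : Fin n → ℂ)
    (hγ : (A.map (Int.cast : ℤ → ℂ)).mulVec γ = β)
    (f : MvPolynomial (Fin n) ℂ)
    (hf : ∀ l : Fin n → ℤ, A.mulVec l = 0 →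
      (aeval (fun i : Fin n => X i + C ((l i : ℂ)))) f - f ∈
        Ideal.span (Set.range fun k : Fin d =>
          (∑ i : Fin n, C ((A k i : ℂ)) * X i) - C (β k))) :
    f - C (eval γ f) ∈
      Ideal.span (Set.range fun k : Fin d =>
        (∑ i : Fin n, C ((A k i : ℂ)) * X i) - C (β k)) := by
  classical
  set Aℂ := A.map (Int.cast : ℤ → ℂ) with hAC
  obtain ⟨Q, hQ⟩ := exists_right_inverse d n Aℂ hrank
  set π : Matrix (Fin n) (Fin n) ℂ := 1 - Q * Aℂ with hπ
  set I := Ideal.span (Set.range fun k : Fin d =>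
      (∑ i : Fin n, C ((A k i : ℂ)) * X i) - C (β k)) with hI
  set g0 : Fin n → MvPolynomial (Fin n) ℂ :=
    fun i => C (γ i) + ∑ k, C (π i k) * (X k - C (γ k)) with hg0
  have hβ : ∀ r, β r = ∑ k, (Aℂ r k) * γ k := by
    intro r
    have := congrFun hγ r
    simpa [Matrix.mulVec, dotProduct] using this.symm
  -- key identity
  have key : ∀ i : Fin n, X i - g0 i
      = ∑ r, C (Q i r) * ((∑ k : Fin n, C ((A r k : ℂ)) * X k) - C (β r)) := by
    intro i
    apply MvPolynomial.funext
    intro x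
    simp only [hg0, map_sub, map_sum, map_add, map_mul, eval_X, eval_C]
    have hL : γ i + ∑ k, π i k * (x k - γ k)
        = x i - ∑ k, (Q * Aℂ) i k * (x k - γ k) := by
      simp only [hπ, Matrix.sub_apply, Matrix.one_apply, sub_mul, ite_mul, one_mul, zero_mul]
      rw [Finset.sum_sub_distrib, Finset.sum_ite_eq]
      simp
      ring
    have hR : ∑ r, Q i r * ((∑ k, ((A r k : ℂ)) * x k) - β r)
        = ∑ k, (Q * Aℂ) i k * (x k - γ k) := by
      have h1 : ∀ r, (∑ k, ((A r k : ℂ)) * x k) - β r = ∑ k, ((A r k : ℂ)) * (x k - γ k) := by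
        intro r
        rw [hβ r, ← Finset.sum_sub_distrib]
        refine Finset.sum_congr rfl fun k _ => ?_
        simp only [hAC, Matrix.map_apply]
        ring
      simp only [h1, Finset.mul_sum]
      rw [Finset.sum_comm]
      refine Finset.sum_congr rfl fun k _ => ?_
      rw [Matrix.mul_apply, Finset.sum_mul]
      refine Finset.sum_congr rfl fun r _ => ?_
      simp only [hAC, Matrix.map_apply]
      ring
    rw [hR, hL]
    ring
  -- membership of the key combination
  have hXmem : ∀ i : Fin n, X i - g0 i ∈ I := by
    intro i
    rw [key i, hI]
    refine Ideal.sum_mem _ fun r _ => Ideal.mul_mem_left _ _ (Ideal.subset_span ⟨r, rfl⟩)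
  -- retraction: p - aeval g0 p ∈ I for all p
  have claimA : ∀ p : MvPolynomial (Fin n) ℂ, p - aeval g0 p ∈ I := by
    intro p
    induction p using MvPolynomial.induction_on with
    | C a => simp
    | add p q ihp ihq =>
      have : p + q - aeval g0 (p + q) = (p - aeval g0 p) + (q - aeval g0 q) := by
        rw [map_add]; ring
      rw [this]; exact Ideal.add_mem _ ihp ihq
    | mul_X p i ihp =>
      have : p * X i - aeval g0 (p * X i)
          = p * (X i - g0 i) + g0 i * (p - aeval g0 p) := by
        rw [map_mul, aeval_X]; ring
      rw [this]
      exact Ideal.add_mem _ (Ideal.mul_mem_left _ _ (hXmem i))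
        (Ideal.mul_mem_left _ _ ihp)
  -- aeval g0 f is the constant eval γ f
  have h2 : aeval g0 f = C (eval γ f) := by
    apply MvPolynomial.funext
    intro x
    have h3 : (eval x : MvPolynomial (Fin n) ℂ →+* ℂ) (aeval g0 f)
        = aeval (fun i => (aeval x : MvPolynomial (Fin n) ℂ →ₐ[ℂ] ℂ) (g0 i)) f := by
      exact DFunLike.congr_fun (comp_aeval (R := ℂ) g0 (aeval x)) f
    have hw : (fun i => (aeval x : MvPolynomial (Fin n) ℂ →ₐ[ℂ] ℂ) (g0 i))
        = γ + π.mulVec (x - γ) := by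
      funext i
      simp only [hg0, map_add, map_sum, map_mul, map_sub, aeval_X, aeval_C,
        Algebra.algebraMap_self, RingHom.id_apply, Pi.add_apply]
      rw [Matrix.mulVec, dotProduct]
      simp [Pi.sub_apply]
    have hAπ : Aℂ * π = 0 := by
      rw [hπ, Matrix.mul_sub, Matrix.mul_one, ← Matrix.mul_assoc, hQ, Matrix.one_mul, sub_self]
    have hfib : Aℂ.mulVec (γ + π.mulVec (x - γ)) = β := by
      rw [Matrix.mulVec_add, hγ, Matrix.mulVec_mulVec, hAπ, Matrix.zero_mulVec, add_zero]
    have h4 := eval_eq_on_fiber d n A β γ hγ f hf (γ + π.mulVec (x - γ)) hfib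
    rw [h3, hw]
    rw [eval_C]
    exact h4
  rw [← h2]
  exact claimA f
end
end

section
/- Let φ : ℝ^d → ℝ be a linear functional with φ(a_i) ≥ 0 for all i, let F = {a_i : φ(a_i) = 0}, and fix an index j with φ(a_j) > 0. Then the set { t ∈ [0,1) : (ℂF + t·a_j) ∩ ℕA ≠ ∅ } is finite, where ℂF denotes the ℂ-linear span of F in ℂ^d and ℕA ⊆ ℤ^d is viewed inside ℂ^d. -/
noncomputable section

open scoped BigOperators

variable {d n : ℕ}

/-- Let `φ` be a linear functional nonnegative on all columns of `A`, with
`φ(a_j) > 0`, and let `F = {a_i : φ(a_i) = 0}`. Then the set of `t ∈ [0,1)`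
with `(ℂF + t·a_j) ∩ ℕA ≠ ∅` is finite. -/
theorem finite_shifts_meeting_NA (hd : 0 < d) (hn : 0 < n)
    (A : Matrix (Fin d) (Fin n) ℤ)
    (φ : (Fin d → ℝ) →ₗ[ℝ] ℝ)
    (hφ : ∀ i, 0 ≤ φ (colR A i)) (j : Fin n) (hj : 0 < φ (colR A j)) :
    {t : ℝ | t ∈ Set.Ico (0 : ℝ) 1 ∧
      ∃ m ∈ NA A,
        ∃ v ∈ Submodule.span ℂ {v : Fin d → ℂ | ∃ i, φ (colR A i) = 0 ∧ v = colC A i},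
          zToC m = v + (t : ℂ) • colC A j}.Finite := by
  classical
  set ψ : (Fin d → ℂ) →ₗ[ℂ] ℂ :=
    ∑ k : Fin d, (↑(φ (Pi.single k 1)) : ℂ) • (LinearMap.proj k) with hψdef
  have hψ_apply : ∀ z : Fin d → ℂ, ψ z = ∑ k, (↑(φ (Pi.single k 1)) : ℂ) * z k := by
    intro z; simp [hψdef]
  have hψ_col : ∀ i, ψ (colC A i) = (φ (colR A i) : ℂ) := by
    intro i
    have h1 : colR A i = ∑ k, colR A i k • (Pi.single k 1 : Fin d → ℝ) := by
      funext l
      simp [Finset.sum_apply, Pi.single_apply]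
    rw [hψ_apply, h1, map_sum]
    push_cast
    simp [colC, colR, map_smul, mul_comm]
  have hψ_span : ∀ v ∈ Submodule.span ℂ
      {v : Fin d → ℂ | ∃ i, φ (colR A i) = 0 ∧ v = colC A i}, ψ v = 0 := by
    intro v hv
    induction hv using Submodule.span_induction with
    | mem x hx => obtain ⟨i, hi, rfl⟩ := hx; rw [hψ_col, hi]; simp
    | zero => simp
    | add x y _ _ hx hy => simp [map_add, hx, hy]
    | smul c x _ hx => simp [map_smul, hx]
  set c : Fin n → ℝ := fun i => φ (colR A i) with hc
  set M : ℕ := ⌈c j * ∑ i, (if c i = 0 then 0 else (c i)⁻¹)⌉₊ with hM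
  have hfin : ({γ : Fin n → ℕ | ∀ i, γ i ≤ M}).Finite := by
    have hsub : {γ : Fin n → ℕ | ∀ i, γ i ≤ M} ⊆
        Set.pi Set.univ (fun _ => Set.Iic M) := by
      intro γ hγ i _; exact hγ i
    exact (Set.Finite.pi (fun _ => Set.finite_Iic M)).subset hsub
  apply (hfin.image (fun γ : Fin n → ℕ => (∑ i, (γ i : ℝ) * c i) / c j)).subset
  rintro t ⟨⟨ht0, ht1⟩, m, ⟨γ, rfl⟩, v, hv, heq⟩
  have hz : zToC (∑ i, (γ i : ℤ) • colZ A i) = ∑ i, (γ i : ℂ) • colC A i := by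
    funext k
    simp only [zToC, colZ, colC, Finset.sum_apply, Pi.smul_apply, smul_eq_mul]
    push_cast
    ring
  have key : (∑ i, (γ i : ℝ) * c i) = t * c j := by
    have h1 := congrArg ψ heq
    rw [hz, map_sum, map_add, map_smul, hψ_span v hv, hψ_col] at h1
    simp only [map_smul, hψ_col, smul_eq_mul, zero_add] at h1
    exact_mod_cast h1
  have hterm : ∀ i ∈ Finset.univ, 0 ≤ (γ i : ℝ) * c i := by
    intro i _
    exact mul_nonneg (by positivity) (hφ i)
  have hlt : t * c j < c j := by
    nlinarith [hj]
  refine ⟨fun i => if c i = 0 then 0 else γ i, ?_, ?_⟩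
  · intro i
    by_cases hci : c i = 0
    · simp [hci]
    · have hcpos : 0 < c i := lt_of_le_of_ne (hφ i) (Ne.symm hci)
      have h2 : (γ i : ℝ) * c i ≤ ∑ i, (γ i : ℝ) * c i :=
        Finset.single_le_sum hterm (Finset.mem_univ i)
      have h3 : (γ i : ℝ) * c i < c j := by
        calc (γ i : ℝ) * c i ≤ ∑ i, (γ i : ℝ) * c i := h2
          _ = t * c j := key
          _ < c j := hlt
      have h4 : (γ i : ℝ) < c j * (c i)⁻¹ := by
        rw [lt_mul_inv_iff₀ hcpos] at *
        linarith [h3]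
      have h5 : c j * (c i)⁻¹ ≤ c j * ∑ i, (if c i = 0 then 0 else (c i)⁻¹) := by
        apply mul_le_mul_of_nonneg_left _ (le_of_lt hj)
        have : (c i)⁻¹ = (if c i = 0 then 0 else (c i)⁻¹) := by simp [hci]
        rw [this]
        apply Finset.single_le_sum (f := fun i => (if c i = 0 then 0 else (c i)⁻¹))
          _ (Finset.mem_univ i)
        intro k _
        by_cases hck : c k = 0
        · simp [hck]
        · have : 0 < c k := lt_of_le_of_ne (hφ k) (Ne.symm hck)
          simp [hck, le_of_lt (inv_pos.mpr this)]
      have h6 : (γ i : ℝ) < (M : ℝ) := lt_of_lt_of_le h4 (h5.trans (Nat.le_ceil _))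
      simp only [hci, if_false]
      exact le_of_lt (by exact_mod_cast h6)
  · simp only
    push_cast
    have hsum : (∑ i, (if c i = 0 then (0:ℝ) else (γ i : ℝ)) * c i)
        = ∑ i, (γ i : ℝ) * c i := by
      apply Finset.sum_congr rfl
      intro i _
      by_cases hci : c i = 0 <;> simp [hci]
    rw [hsum, key, mul_div_assoc, div_self (ne_of_gt hj), mul_one]
end
end

section
/- Suppose the columns a_1,…,a_n of A generate ℤ^d as a ℤ-module. Then for every β ∈ ℚ^d there exists α ∈ ℤ^d such that β + α lies in −(ℝ₊A)°, the negative of the topological interior of the cone ℝ₊A in ℝ^d; in particular β + α ∉ 𝔻sRes(A) (ℚ^d and ℝ^d being viewed inside ℂ^d). -/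
noncomputable section

open scoped BigOperators

variable {d n : ℕ}

/-! ### Auxiliary lemmas -/

lemma RplusA_smul (A : Matrix (Fin d) (Fin n) ℤ) {t : ℝ} (ht : 0 ≤ t)
    {x : Fin d → ℝ} (hx : x ∈ RplusA A) : t • x ∈ RplusA A := by
  obtain ⟨c, hc, rfl⟩ := hx
  refine ⟨fun i => t * c i, fun i => mul_nonneg ht (hc i), ?_⟩
  rw [Finset.smul_sum]
  exact Finset.sum_congr rfl fun i _ => by rw [smul_smul]

lemma phi_nonneg (A : Matrix (Fin d) (Fin n) ℤ) (φ : (Fin d → ℝ) →ₗ[ℝ] ℝ)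
    (hnn : ∀ i, 0 ≤ φ (colR A i)) {x : Fin d → ℝ} (hx : x ∈ RplusA A) :
    0 ≤ φ x := by
  obtain ⟨c, hc, rfl⟩ := hx
  rw [map_sum]
  refine Finset.sum_nonneg fun i _ => ?_
  rw [map_smul, smul_eq_mul]
  exact mul_nonneg (hc i) (hnn i)

lemma phi_pos_interior (A : Matrix (Fin d) (Fin n) ℤ) (φ : (Fin d → ℝ) →ₗ[ℝ] ℝ)
    (hnn : ∀ i, 0 ≤ φ (colR A i)) (j : Fin n) (hj : 0 < φ (colR A j))
    {x : Fin d → ℝ} (hx : x ∈ interior (RplusA A)) : 0 < φ x := by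
  obtain ⟨ε, hε, hball⟩ := Metric.mem_nhds_iff.mp (mem_interior_iff_mem_nhds.mp hx)
  set q : ℝ := ‖colR A j‖ with hq
  have hq0 : 0 ≤ q := norm_nonneg _
  set t : ℝ := ε / (2 * (q + 1)) with htdef
  have htpos : 0 < t := div_pos hε (by positivity)
  have hkey : t * (2 * (q + 1)) = ε := by
    rw [htdef]
    exact div_mul_cancel₀ ε (by positivity)
  have hdist : dist (x - t • colR A j) x < ε := by
    rw [dist_eq_norm, sub_sub_cancel_left, norm_neg, norm_smul, Real.norm_eq_abs,
      abs_of_pos htpos]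
    nlinarith
  have hmem : x - t • colR A j ∈ RplusA A := hball (Metric.mem_ball.mpr hdist)
  have h0 := phi_nonneg A φ hnn hmem
  rw [map_sub, map_smul, smul_eq_mul] at h0
  nlinarith

/-- The coordinatewise cast `ℤ^d → ℝ^d` as a `ℤ`-linear map. -/
def castLM : (Fin d → ℤ) →ₗ[ℤ] (Fin d → ℝ) where
  toFun m := fun k => (m k : ℝ)
  map_add' a b := by funext k; simp [Pi.add_apply]
  map_smul' z a := by funext k; simp [Pi.smul_apply]

lemma span_colR_top (A : Matrix (Fin d) (Fin n) ℤ)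
    (hgen : Submodule.span ℤ (Set.range (colZ A)) = ⊤) :
    Submodule.span ℝ (Set.range (colR A)) = ⊤ := by
  have hmap : Submodule.map castLM (Submodule.span ℤ (Set.range (colZ A))) ≤
      (Submodule.span ℝ (Set.range (colR A))).restrictScalars ℤ := by
    rw [Submodule.map_span, Submodule.span_le]
    rintro _ ⟨_, ⟨i, rfl⟩, rfl⟩
    exact Submodule.subset_span ⟨i, rfl⟩
  rw [eq_top_iff]
  intro x _
  have hx : x = ∑ i, x i • fun j => if i = j then (1 : ℝ) else 0 :=
    pi_eq_sum_univ x
  rw [hx]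
  refine Submodule.sum_mem _ fun i _ => Submodule.smul_mem _ _ ?_
  have hi : (fun j => if i = j then (1 : ℝ) else 0) =
      castLM (fun j => if i = j then (1 : ℤ) else 0) := by
    funext j
    simp [castLM, apply_ite (fun z : ℤ => (z : ℝ))]
  rw [hi]
  exact hmap ⟨_, by rw [hgen]; trivial, rfl⟩

lemma sum_cols_mem_interior (A : Matrix (Fin d) (Fin n) ℤ)
    (hgen : Submodule.span ℤ (Set.range (colZ A)) = ⊤) :
    (∑ i, colR A i) ∈ interior (RplusA A) := by
  set L := Fintype.linearCombination ℝ (colR A) with hL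
  have hsurj : Function.Surjective L := by
    rw [← LinearMap.range_eq_top, Fintype.range_linearCombination]
    exact span_colR_top A hgen
  have hopen : IsOpenMap (LinearMap.toContinuousLinearMap L) :=
    ContinuousLinearMap.isOpenMap _ (by rwa [LinearMap.coe_toContinuousLinearMap'])
  have hU : IsOpen {c : Fin n → ℝ | ∀ i, 0 < c i} := by
    have : {c : Fin n → ℝ | ∀ i, 0 < c i} =
        Set.pi Set.univ (fun _ => Set.Ioi (0 : ℝ)) := by
      ext c; simp [Set.mem_pi]
    rw [this]
    exact isOpen_set_pi Set.finite_univ fun _ _ => isOpen_Ioi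
  have hsub : (LinearMap.toContinuousLinearMap L) '' {c | ∀ i, 0 < c i} ⊆ RplusA A := by
    rintro _ ⟨c, hc, rfl⟩
    refine ⟨c, fun i => (hc i).le, ?_⟩
    rw [LinearMap.coe_toContinuousLinearMap']
    exact (Fintype.linearCombination_apply ℝ (colR A) c)
  have h1 : (∑ i, colR A i) ∈ (LinearMap.toContinuousLinearMap L) '' {c | ∀ i, 0 < c i} := by
    refine ⟨fun _ => 1, fun _ => one_pos, ?_⟩
    rw [LinearMap.coe_toContinuousLinearMap']
    rw [Fintype.linearCombination_apply]
    simp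
  exact interior_maximal hsub (hopen _ hU) h1

/-- The complexification of a real linear functional on `ℝ^d`, as a `ℂ`-linear
functional on `ℂ^d`. -/
def phiC (φ : (Fin d → ℝ) →ₗ[ℝ] ℝ) : (Fin d → ℂ) →ₗ[ℂ] ℂ where
  toFun w := ∑ k, ((φ fun j => if k = j then 1 else 0 : ℝ) : ℂ) * w k
  map_add' a b := by simp [mul_add, Finset.sum_add_distrib]
  map_smul' c a := by
    simp only [Pi.smul_apply, smul_eq_mul, RingHom.id_apply, Finset.mul_sum]
    exact Finset.sum_congr rfl fun k _ => by ring

lemma phiC_real (φ : (Fin d → ℝ) →ₗ[ℝ] ℝ) (x : Fin d → ℝ) :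
    phiC φ (rToC x) = ((φ x : ℝ) : ℂ) := by
  rw [LinearMap.pi_apply_eq_sum_univ φ x]
  push_cast
  show (∑ k, ((φ fun j => if k = j then 1 else 0 : ℝ) : ℂ) * ((x k : ℝ) : ℂ)) = _
  exact Finset.sum_congr rfl fun k _ => by rw [smul_eq_mul]; push_cast; ring

lemma phiC_face (A : Matrix (Fin d) (Fin n) ℤ) (φ : (Fin d → ℝ) →ₗ[ℝ] ℝ)
    {v : Fin d → ℂ} (hv : v ∈ faceSpan A φ) : phiC φ v = 0 := by
  have hle : faceSpan A φ ≤ LinearMap.ker (phiC φ) := by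
    rw [faceSpan, Submodule.span_le]
    rintro _ ⟨i, hi, rfl⟩
    have hcol : colC A i = rToC (colR A i) := by
      funext k; simp [colC, colR, rToC]
    simp [LinearMap.mem_ker, hcol, phiC_real, hi]
  exact (LinearMap.mem_ker).mp (hle hv)

/-- If the columns of `A` generate `ℤ^d`, then for every `β ∈ ℚ^d` there is
`α ∈ ℤ^d` such that `β + α ∈ −(ℝ₊A)°`; in particular `β + α ∉ 𝔻sRes(A)`. -/
theorem exists_int_translate_in_neg_interior (hd : 0 < d) (hn : 0 < n)
    (A : Matrix (Fin d) (Fin n) ℤ)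
    (hgen : Submodule.span ℤ (Set.range (colZ A)) = ⊤) :
    ∀ β : Fin d → ℚ, ∃ α : Fin d → ℤ,
      (fun k => -((β k : ℝ) + (α k : ℝ))) ∈ interior (RplusA A) ∧
      (fun k => ((β k + α k : ℚ) : ℂ)) ∉ DsRes A := by
  intro β
  have hs := sum_cols_mem_interior A hgen
  obtain ⟨ε, hε, hball⟩ := Metric.mem_nhds_iff.mp (mem_interior_iff_mem_nhds.mp hs)
  obtain ⟨N, hN⟩ := exists_nat_gt (1 / ε)
  have hN0 : (0 : ℝ) < N := lt_trans (by positivity) hN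
  have hNε : 1 < (N : ℝ) * ε := by
    rw [div_lt_iff₀ hε] at hN; linarith
  set s : Fin d → ℝ := ∑ i, colR A i with hsdef
  set sZ : Fin d → ℤ := ∑ i, colZ A i with hsZdef
  have hsZ : ∀ k, ((sZ k : ℤ) : ℝ) = s k := by
    intro k
    simp only [hsdef, hsZdef, Finset.sum_apply]
    push_cast
    rfl
  set α : Fin d → ℤ := fun k => -⌈β k⌉ - N * sZ k with hα
  have hcoord : ∀ k, -((β k : ℝ) + (α k : ℝ)) = (N : ℝ) * s k + ((⌈β k⌉ : ℝ) - (β k : ℝ)) := by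
    intro k
    have := hsZ k
    simp only [hα]
    push_cast
    rw [this]
    ring
  -- the ball around N • s is inside the cone
  have hballsub : Metric.ball ((N : ℝ) • s) ((N : ℝ) * ε) ⊆ RplusA A := by
    intro y hy
    have hy' : (N : ℝ)⁻¹ • y ∈ Metric.ball s ε := by
      have h1 : (N : ℝ)⁻¹ • ((N : ℝ) • s) = s := by
        rw [smul_smul, inv_mul_cancel₀ (ne_of_gt hN0), one_smul]
      rw [Metric.mem_ball, ← h1, dist_smul₀, Real.norm_eq_abs,
        abs_of_pos (inv_pos.mpr hN0)]
      rw [Metric.mem_ball] at hy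
      calc (N : ℝ)⁻¹ * dist y ((N : ℝ) • s) < (N : ℝ)⁻¹ * ((N : ℝ) * ε) := by
            exact mul_lt_mul_of_pos_left hy (inv_pos.mpr hN0)
        _ = ε := by field_simp
    have := RplusA_smul A (le_of_lt hN0) (hball hy')
    rwa [smul_smul, mul_inv_cancel₀ (ne_of_gt hN0), one_smul] at this
  have hxball : (fun k => -((β k : ℝ) + (α k : ℝ))) ∈
      Metric.ball ((N : ℝ) • s) ((N : ℝ) * ε) := by
    rw [Metric.mem_ball, dist_eq_norm]
    have hnorm : ‖(fun k => -((β k : ℝ) + (α k : ℝ))) - (N : ℝ) • s‖ ≤ 1 := by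
      apply pi_norm_le_iff_of_nonneg zero_le_one |>.mpr
      intro k
      have h1 : ((β k : ℝ)) ≤ ((⌈β k⌉ : ℤ) : ℝ) := by exact_mod_cast Int.le_ceil (β k)
      have h2 : (((⌈β k⌉ : ℤ) : ℝ)) < (β k : ℝ) + 1 := by
        exact_mod_cast Int.ceil_lt_add_one (β k)
      have : ((fun k => -((β k : ℝ) + (α k : ℝ))) - (N : ℝ) • s) k =
          ((⌈β k⌉ : ℝ) - (β k : ℝ)) := by
        simp only [Pi.sub_apply, Pi.smul_apply, smul_eq_mul, hcoord k]
        ring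
      rw [this, Real.norm_eq_abs, abs_le]
      constructor <;> linarith
    linarith
  have hxint : (fun k => -((β k : ℝ) + (α k : ℝ))) ∈ interior (RplusA A) :=
    interior_maximal hballsub Metric.isOpen_ball hxball
  refine ⟨α, hxint, ?_⟩
  rintro ⟨φ, hnn, ⟨j, hj⟩, m, hmQ, v, hv, hz⟩
  set y : Fin d → ℝ := fun k => (β k : ℝ) + (α k : ℝ) with hy
  -- φ y < 0
  have hyneg : φ y < 0 := by
    have hx' : -y ∈ interior (RplusA A) := by
      have : -y = fun k => -((β k : ℝ) + (α k : ℝ)) := by funext k; simp [hy]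
      rw [this]; exact hxint
    have := phi_pos_interior A φ hnn j hj hx'
    rw [map_neg] at this
    linarith
  -- φ y = φ (cast of m) ≥ 0
  have hzy : (fun k => ((β k + α k : ℚ) : ℂ)) = rToC y := by
    funext k; simp only [rToC, hy]; push_cast; ring
  have hmδ : (fun k => ((m k : ℤ) : ℝ)) ∈ RplusA A := by
    obtain ⟨c, hc, heq⟩ := hmQ
    refine ⟨fun i => (c i : ℝ), fun i => by simp only []; exact_mod_cast hc i, ?_⟩
    funext k
    have hk := congrFun heq k
    simp only [Finset.sum_apply, Pi.smul_apply, smul_eq_mul] at hk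
    simp only [Finset.sum_apply, Pi.smul_apply, smul_eq_mul, colR]
    exact_mod_cast hk
  have hmnn : 0 ≤ φ (fun k => ((m k : ℤ) : ℝ)) := phi_nonneg A φ hnn hmδ
  have hzm : zToC m = rToC (fun k => ((m k : ℤ) : ℝ)) := by
    funext k; simp [zToC, rToC]
  have heval : ((φ y : ℝ) : ℂ) = ((φ (fun k => ((m k : ℤ) : ℝ)) : ℝ) : ℂ) := by
    calc ((φ y : ℝ) : ℂ) = phiC φ (rToC y) := (phiC_real φ y).symm
      _ = phiC φ (zToC m + v) := by rw [← hzy, ← hz]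
      _ = phiC φ (zToC m) + phiC φ v := map_add _ _ _
      _ = phiC φ (zToC m) := by rw [phiC_face A φ hv, add_zero]
      _ = _ := by rw [hzm, phiC_real]
  have : φ y = φ (fun k => ((m k : ℤ) : ℝ)) := by exact_mod_cast heval
  linarith
end
end

section
/- Let U ⊆ ℝ^d be a nonempty open set that is closed under addition (u, v ∈ U implies u + v ∈ U). Then for every β ∈ ℝ^d the set U ∩ (β + ℤ^d) is nonempty; that is, every translate of the lattice ℤ^d meets U. -/
/-- A nonempty open subset of `ℝ^d` that is closed under addition meets every
translate of the integer lattice `ℤ^d`. -/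
theorem open_addClosed_meets_lattice_translate
    (d : ℕ) (U : Set (Fin d → ℝ)) (hopen : IsOpen U) (hne : U.Nonempty)
    (hadd : ∀ u ∈ U, ∀ v ∈ U, u + v ∈ U) :
    ∀ β : Fin d → ℝ,
      (U ∩ {x | ∃ α : Fin d → ℤ, x = β + fun k => (α k : ℝ)}).Nonempty := by
  obtain ⟨u, hu⟩ := hne
  obtain ⟨ε, hε, hball⟩ := Metric.isOpen_iff.mp hopen u hu
  have key : ∀ n : ℕ, Metric.ball (((n : ℝ) + 1) • u) (((n : ℝ) + 1) * ε) ⊆ U := by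
    intro n
    induction n with
    | zero => simpa using hball
    | succ n ih =>
      intro x hx
      rw [Metric.mem_ball, dist_eq_norm] at hx
      push_cast at hx
      set c : ℝ := (n : ℝ) + 1 with hc
      have hc0 : (0:ℝ) < c := by positivity
      have hc1 : (0:ℝ) < c + 1 := by positivity
      clear_value c
      set w : Fin d → ℝ := x - (c + 1) • u with hw
      have hwn : ‖w‖ < (c + 1) * ε := hx
      set y : Fin d → ℝ := c • u + (c / (c + 1)) • w with hy
      set z : Fin d → ℝ := u + (1 / (c + 1)) • w with hz
      have hxyz : x = y + z := by
        rw [hy, hz, hw]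
        match_scalars <;> (field_simp; try ring)
      have hyU : y ∈ U := by
        apply ih
        rw [Metric.mem_ball, dist_eq_norm]
        have : y - c • u = (c / (c + 1)) • w := by rw [hy]; abel
        rw [this, norm_smul]
        have : ‖(c / (c + 1) : ℝ)‖ = c / (c + 1) := by
          rw [Real.norm_eq_abs, abs_of_pos (by positivity)]
        rw [this]
        calc c / (c + 1) * ‖w‖ < c / (c + 1) * ((c + 1) * ε) := by
              apply mul_lt_mul_of_pos_left hwn (by positivity)
          _ = c * ε := by field_simp
      have hzU : z ∈ U := by
        apply hball
        rw [Metric.mem_ball, dist_eq_norm]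
        have : z - u = (1 / (c + 1)) • w := by rw [hz]; abel
        rw [this, norm_smul]
        have h : ‖(1 / (c + 1) : ℝ)‖ = 1 / (c + 1) := by
          rw [Real.norm_eq_abs, abs_of_pos (by positivity)]
        rw [h]
        calc 1 / (c + 1) * ‖w‖ < 1 / (c + 1) * ((c + 1) * ε) := by
              apply mul_lt_mul_of_pos_left hwn (by positivity)
          _ = ε := by field_simp
      rw [hxyz]
      exact hadd y hyU z hzU
  intro β
  obtain ⟨n, hn⟩ := exists_nat_gt (1 / ε)
  have hnε : 1 < ((n : ℝ) + 1) * ε := by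
    have h1 : 1 / ε < (n : ℝ) + 1 := lt_of_lt_of_le hn (by linarith)
    calc (1:ℝ) = (1 / ε) * ε := by field_simp
      _ < ((n : ℝ) + 1) * ε := by apply mul_lt_mul_of_pos_right h1 hε
  set v : Fin d → ℝ := ((n : ℝ) + 1) • u with hv
  set α : Fin d → ℤ := fun k => round (v k - β k) with hα
  set x : Fin d → ℝ := β + fun k => (α k : ℝ) with hx
  refine ⟨x, ?_, ⟨α, rfl⟩⟩
  apply key n
  rw [Metric.mem_ball]
  have hle : dist x v ≤ 1 / 2 := by
    apply dist_pi_le_iff (by norm_num) |>.mpr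
    intro k
    rw [Real.dist_eq]
    have : x k - v k = -(v k - β k - round (v k - β k)) := by
      simp [hx, hα]; ring
    rw [this, abs_neg]
    exact abs_sub_round _
  calc dist x v ≤ 1 / 2 := hle
    _ < 1 := by norm_num
    _ < ((n : ℝ) + 1) * ε := hnε
end
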